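/- arXiv:1609.00594 — 4 statements merged into one kernel-verified Lean document; each statement's English description precedes it below -/
import Mathlib

section
/- Fix P > 0 and define the information density i_P : ℝ × ℝ → ℝ by i_P(x, y) := (1/2)·log(1 + P) − (y − x)²/2 + y²/(2(1 + P)). Let X ~ N(0, P) and Z ~ N(0, 1) be independent Gaussian random variables and set Y = X + Z. Then E[i_P(X, Y)] = (1/2)·log(1 + P) and Var(i_P(X, Y)) = P/(1 + P). -/
open MeasureTheory ProbabilityTheory Real Filter NNReal ENNReal

section AWGNAux


lemma awgn_aux_integ (n : ℕ) {b : ℝ} (hb : 0 < b) :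
    Integrable (fun x : ℝ => x ^ n * exp (-b * x ^ 2)) := by
  have h := integrable_rpow_mul_exp_neg_mul_sq hb
    (s := (n : ℝ)) (lt_of_lt_of_le (by norm_num) (Nat.cast_nonneg n))
  simpa [Real.rpow_natCast] using h

lemma awgn_exp_deriv {b : ℝ} (x : ℝ) :
    HasDerivAt (fun x : ℝ => exp (-b * x ^ 2)) (exp (-b * x ^ 2) * (-b * (2 * x))) x := by
  have h : HasDerivAt (fun x : ℝ => -b * x ^ 2) (-b * (2 * x)) x := by
    simpa using (hasDerivAt_pow 2 x).const_mul (-b)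
  exact h.exp

lemma awgn_exp_tendsto {b : ℝ} (hb : 0 < b) {l : Filter ℝ}
    (hsq : Tendsto (fun x : ℝ => x ^ 2) l atTop) :
    Tendsto (fun x : ℝ => exp (-b * x ^ 2)) l (nhds 0) := by
  have h1 : Tendsto (fun x : ℝ => b * x ^ 2) l atTop := hsq.const_mul_atTop hb
  have h2 : Tendsto (fun x : ℝ => -(b * x ^ 2)) l atBot := tendsto_neg_atTop_atBot.comp h1
  exact (Real.tendsto_exp_atBot.comp h2).congr (fun x => by simp [Function.comp, neg_mul])

lemma awgn_sq_atBot : Tendsto (fun x : ℝ => x ^ 2) atBot atTop := by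
  have h := (tendsto_pow_atTop (n := 2) (by norm_num)).comp (tendsto_abs_atBot_atTop (G := ℝ))
  exact h.congr fun x => by simp [Function.comp, sq_abs]

lemma awgn_moment_one {b : ℝ} (hb : 0 < b) :
    ∫ x : ℝ, x * exp (-b * x ^ 2) = 0 := by
  have hderiv : ∀ x : ℝ, HasDerivAt (fun x : ℝ => -(2*b)⁻¹ * exp (-b * x ^ 2))
      (x * exp (-b * x ^ 2)) x := by
    intro x
    have := (awgn_exp_deriv (b := b) x).const_mul (-(2*b)⁻¹)
    refine this.congr_deriv ?_
    field_simp
  have hint : Integrable (fun x : ℝ => x * exp (-b * x ^ 2)) := by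
    simpa using awgn_aux_integ 1 hb
  have hb' : Tendsto (fun x : ℝ => -(2*b)⁻¹ * exp (-b * x ^ 2)) atBot (nhds 0) := by
    simpa using (awgn_exp_tendsto hb awgn_sq_atBot).const_mul (-(2*b)⁻¹)
  have ht' : Tendsto (fun x : ℝ => -(2*b)⁻¹ * exp (-b * x ^ 2)) atTop (nhds 0) := by
    simpa using (awgn_exp_tendsto hb (tendsto_pow_atTop two_ne_zero)).const_mul (-(2*b)⁻¹)
  simpa using integral_of_hasDerivAt_of_tendsto hderiv hint hb' ht'

lemma awgn_moment_rec (n : ℕ) {b : ℝ} (hb : 0 < b) :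
    ∫ x : ℝ, x ^ (n+2) * exp (-b * x ^ 2) =
      ((n+1 : ℝ)/(2*b)) * ∫ x : ℝ, x ^ n * exp (-b * x ^ 2) := by
  have hderiv : ∀ x : ℝ, HasDerivAt (fun x : ℝ => x ^ (n+1) * exp (-b * x ^ 2))
      ((n+1 : ℝ) * (x ^ n * exp (-b * x ^ 2)) - 2*b*(x ^ (n+2) * exp (-b * x ^ 2))) x := by
    intro x
    have h1 : HasDerivAt (fun x : ℝ => x ^ (n+1)) ((n+1 : ℝ) * x ^ n) x := by
      simpa using hasDerivAt_pow (n+1) x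
    have := h1.mul (awgn_exp_deriv (b := b) x)
    refine this.congr_deriv ?_
    ring
  have hint : ∫ x : ℝ, ((n+1 : ℝ) * (x ^ n * exp (-b * x ^ 2)) - 2*b*(x ^ (n+2) * exp (-b * x ^ 2))) = 0 :=
    integral_eq_zero_of_hasDerivAt_of_integrable hderiv
      (((awgn_aux_integ n hb).const_mul _).sub ((awgn_aux_integ (n+2) hb).const_mul _))
      (awgn_aux_integ (n+1) hb)
  rw [integral_sub ((awgn_aux_integ n hb).const_mul _) ((awgn_aux_integ (n+2) hb).const_mul _),
    integral_const_mul, integral_const_mul] at hint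
  have h2b : (2*b) ≠ 0 := by positivity
  rw [div_mul_eq_mul_div, eq_div_iff h2b]
  linear_combination -hint

lemma awgn_gauss_integral {v : ℝ≥0} (hv : v ≠ 0) (g : ℝ → ℝ) :
    ∫ x, g x ∂(gaussianReal 0 v) = ∫ x, gaussianPDFReal 0 v x * g x := by
  rw [gaussianReal_of_var_ne_zero 0 hv]
  have hmeas : Measurable fun x => Real.toNNReal (gaussianPDFReal 0 v x) :=
    (measurable_gaussianPDFReal 0 v).real_toNNReal
  have hpdf : gaussianPDF 0 v = fun x => ((Real.toNNReal (gaussianPDFReal 0 v x) : ℝ≥0) : ENNReal) := rfl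
  rw [hpdf, integral_withDensity_eq_integral_smul hmeas]
  refine integral_congr_ae (Eventually.of_forall fun x => ?_)
  simp [NNReal.smul_def, Real.coe_toNNReal _ (gaussianPDFReal_nonneg 0 v x)]

lemma awgn_integrable_pow {v : ℝ≥0} (hv : v ≠ 0) (n : ℕ) :
    Integrable (fun x : ℝ => x ^ n) (gaussianReal 0 v) := by
  have hvpos : (0:ℝ) < v := NNReal.coe_pos.2 (zero_lt_iff.mpr hv)
  have hb : (0:ℝ) < (2*(v:ℝ))⁻¹ := by positivity
  rw [gaussianReal_of_var_ne_zero 0 hv]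
  have hmeas : Measurable fun x => Real.toNNReal (gaussianPDFReal 0 v x) :=
    (measurable_gaussianPDFReal 0 v).real_toNNReal
  have hpdf : gaussianPDF 0 v = fun x => ((Real.toNNReal (gaussianPDFReal 0 v x) : ℝ≥0) : ENNReal) := rfl
  rw [hpdf, integrable_withDensity_iff_integrable_smul hmeas]
  refine (((awgn_aux_integ n hb).const_mul (√(2*π*v))⁻¹).congr
    (Eventually.of_forall fun x => ?_))
  simp only [NNReal.smul_def, Real.coe_toNNReal _ (gaussianPDFReal_nonneg 0 v x), smul_eq_mul]
  simp only [gaussianPDFReal_def]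
  have harg : -(x - 0)^2/(2*(v:ℝ)) = -(2*(v:ℝ))⁻¹ * x^2 := by ring
  rw [harg]; ring

lemma awgn_moment_pdf {v : ℝ≥0} (hv : v ≠ 0) (n : ℕ) :
    ∫ x, x ^ n ∂(gaussianReal 0 v) =
      (√(2*π*v))⁻¹ * ∫ x, x ^ n * exp (-(2*(v:ℝ))⁻¹ * x ^ 2) := by
  rw [awgn_gauss_integral hv, ← integral_const_mul]
  refine integral_congr_ae (Eventually.of_forall fun x => ?_)
  simp only [gaussianPDFReal_def]
  have harg : -(x - 0)^2/(2*(v:ℝ)) = -(2*(v:ℝ))⁻¹ * x^2 := by ring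
  rw [harg]; ring

lemma awgn_I0 {v : ℝ≥0} (hv : v ≠ 0) :
    ∫ x : ℝ, exp (-(2*(v:ℝ))⁻¹ * x ^ 2) = √(2*π*v) := by
  have hvpos : (0:ℝ) < v := NNReal.coe_pos.2 (zero_lt_iff.mpr hv)
  rw [integral_gaussian]
  congr 1
  rw [div_eq_mul_inv, inv_inv]; ring

lemma awgn_M {v : ℝ≥0} (hv : v ≠ 0) :
    (∫ x, x ∂(gaussianReal 0 v)) = 0 ∧
    (∫ x, x^2 ∂(gaussianReal 0 v)) = (v:ℝ) ∧
    (∫ x, x^3 ∂(gaussianReal 0 v)) = 0 ∧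
    (∫ x, x^4 ∂(gaussianReal 0 v)) = 3*(v:ℝ)^2 := by
  have hvpos : (0:ℝ) < v := NNReal.coe_pos.2 (zero_lt_iff.mpr hv)
  have hb : (0:ℝ) < (2*(v:ℝ))⁻¹ := by positivity
  have hs : (0:ℝ) < √(2*π*v) := Real.sqrt_pos.2 (by positivity)
  have h0 : ∫ x : ℝ, x ^ 0 * exp (-(2*(v:ℝ))⁻¹ * x ^ 2) = √(2*π*v) := by
    simpa using awgn_I0 hv
  have h1 : ∫ x : ℝ, x ^ 1 * exp (-(2*(v:ℝ))⁻¹ * x ^ 2) = 0 := by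
    simpa using awgn_moment_one hb
  have h2 := awgn_moment_rec 0 hb
  have h3 := awgn_moment_rec 1 hb
  have h4 := awgn_moment_rec 2 hb
  rw [h0] at h2
  rw [h1] at h3
  simp only [Nat.reduceAdd, Nat.cast_zero, Nat.cast_one, Nat.cast_ofNat, zero_add, mul_zero] at h2 h3 h4
  rw [h2] at h4
  have e1 : ∫ x, x ∂(gaussianReal 0 v) = 0 := by
    have := awgn_moment_pdf hv 1
    simp only [pow_one] at this h1
    rw [this, h1, mul_zero]
  have hval : ((0:ℕ)+1 : ℝ)/(2*(2*(v:ℝ))⁻¹) = (v:ℝ) := by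
    field_simp
    simp
  refine ⟨e1, ?_, ?_, ?_⟩
  · rw [awgn_moment_pdf hv 2, h2]
    field_simp
  · rw [awgn_moment_pdf hv 3, h3, mul_zero]
  · rw [awgn_moment_pdf hv 4, h4]
    have hsne : √(2*π*v) ≠ 0 := ne_of_gt hs
    field_simp
    ring

lemma awgn_mono_int (μ1 μ2 : Measure ℝ) [SFinite μ1] [SFinite μ2] (r : ℝ) (i j : ℕ) :
    ∫ p : ℝ×ℝ, r * (p.1^i * p.2^j) ∂(μ1.prod μ2) =
      r * ((∫ x, x^i ∂μ1) * (∫ x, x^j ∂μ2)) := by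
  rw [integral_const_mul, integral_prod_mul (fun x => x^i) (fun x => x^j)]


end AWGNAux

/-- For the AWGN channel `Y = X + Z` with `X ~ N(0, P)`, `Z ~ N(0, 1)`
independent, the information density
`i_P(x, y) = (1/2) log (1 + P) − (y − x)²/2 + y²/(2(1 + P))` satisfies
`E[i_P(X, Y)] = (1/2) log (1 + P)` and `Var(i_P(X, Y)) = P/(1 + P)`. -/
theorem awgn_information_density_moments
    {Ω : Type*} [MeasureSpace Ω] [IsProbabilityMeasure (ℙ : Measure Ω)]
    (P : ℝ) (hP : 0 < P)
    (X Z : Ω → ℝ) (hX : Measurable X) (hZ : Measurable Z)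
    (hXlaw : Measure.map X (ℙ : Measure Ω) = gaussianReal 0 (Real.toNNReal P))
    (hZlaw : Measure.map Z (ℙ : Measure Ω) = gaussianReal 0 1)
    (hindep : IndepFun X Z (ℙ : Measure Ω))
    (iP : ℝ → ℝ → ℝ)
    (hiP : ∀ x y, iP x y = (1/2) * Real.log (1 + P) - (y - x)^2/2 + y^2/(2*(1 + P))) :
    (∫ ω, iP (X ω) (X ω + Z ω)) = (1/2) * Real.log (1 + P) ∧
    variance (fun ω => iP (X ω) (X ω + Z ω)) (ℙ : Measure Ω) = P / (1 + P) := by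
  have h1P : (0:ℝ) < 1 + P := by linarith
  have h1P' : (1:ℝ) + P ≠ 0 := ne_of_gt h1P
  have hPnn : Real.toNNReal P ≠ 0 := by
    simp only [ne_eq, Real.toNNReal_eq_zero, not_le]; exact hP
  have hcoeP : ((Real.toNNReal P : ℝ≥0) : ℝ) = P := Real.coe_toNNReal P hP.le
  set ν1 : Measure ℝ := gaussianReal 0 (Real.toNNReal P) with hν1
  set ν2 : Measure ℝ := gaussianReal 0 1 with hν2
  obtain ⟨mP1, mP2, mP3, mP4⟩ := awgn_M hPnn
  obtain ⟨m11, m12, m13, m14⟩ := awgn_M (v := 1) one_ne_zero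
  rw [hcoeP] at mP2 mP4
  rw [NNReal.coe_one] at m12 m14
  set C : ℝ := (1/2) * Real.log (1 + P) with hC
  set a : ℝ := (2*(1+P))⁻¹ with ha
  set bb : ℝ := (1+P)⁻¹ with hbb
  set c : ℝ := a - 1/2 with hc
  set F : ℝ × ℝ → ℝ :=
    fun p => C + (a*(p.1^2*p.2^0) + (bb*(p.1^1*p.2^1) + c*(p.1^0*p.2^2))) with hF
  have hFmeas : Measurable F := by fun_prop
  have hF2meas : Measurable (fun p => (F p)^2) := hFmeas.pow_const 2
  have hpairm : Measurable (fun ω => (X ω, Z ω)) := hX.prodMk hZ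
  have hmap : Measure.map (fun ω => (X ω, Z ω)) ℙ = ν1.prod ν2 := by
    rw [← hXlaw, ← hZlaw]
    exact (indepFun_iff_map_prod_eq_prod_map_map hX.aemeasurable hZ.aemeasurable).mp hindep
  have hcomp : (fun ω => iP (X ω) (X ω + Z ω)) = fun ω => F (X ω, Z ω) := by
    funext ω
    rw [hiP, hF]
    simp only
    rw [hc, ha, hbb]
    field_simp
    ring
  have key : ∀ (i j : ℕ), Integrable (fun p : ℝ × ℝ => p.1 ^ i * p.2 ^ j) (ν1.prod ν2) :=
    fun i j => (awgn_integrable_pow hPnn i).mul_prod (awgn_integrable_pow one_ne_zero j)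
  have keyI : ∀ (i j : ℕ), ∫ p : ℝ × ℝ, p.1 ^ i * p.2 ^ j ∂(ν1.prod ν2)
      = (∫ x, x^i ∂ν1) * (∫ x, x^j ∂ν2) := fun i j => integral_prod_mul _ _
  -- integrable monomial pieces
  have i20 : Integrable (fun p : ℝ×ℝ => a*(p.1^2*p.2^0)) (ν1.prod ν2) := (key 2 0).const_mul a
  have i11 : Integrable (fun p : ℝ×ℝ => bb*(p.1^1*p.2^1)) (ν1.prod ν2) := (key 1 1).const_mul bb
  have i02 : Integrable (fun p : ℝ×ℝ => c*(p.1^0*p.2^2)) (ν1.prod ν2) := (key 0 2).const_mul c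
  have ir1 : Integrable (fun p : ℝ×ℝ => bb*(p.1^1*p.2^1) + c*(p.1^0*p.2^2)) (ν1.prod ν2) :=
    i11.add i02
  have ir0 : Integrable (fun p : ℝ×ℝ =>
      a*(p.1^2*p.2^0) + (bb*(p.1^1*p.2^1) + c*(p.1^0*p.2^2))) (ν1.prod ν2) := i20.add ir1
  have hFint : Integrable F (ν1.prod ν2) := (integrable_const C).add ir0
  have hIF : ∫ p, F p ∂(ν1.prod ν2) = C := by
    simp only [hF]
    rw [integral_add (integrable_const C) ir0, integral_add i20 ir1, integral_add i11 i02,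
      awgn_mono_int, awgn_mono_int, awgn_mono_int, integral_const]
    simp only [pow_zero, pow_one, measure_univ, probReal_univ, ENNReal.toReal_one, smul_eq_mul, one_mul,
      mul_one, hν1, hν2, mP1, mP2, m12, integral_const, mul_zero, zero_mul, zero_add, add_zero]
    rw [hc, ha]
    field_simp
    ring
  -- part 1
  have hEP : ∫ ω, F (X ω, Z ω) = C := by
    rw [← integral_map hpairm.aemeasurable hFmeas.aestronglyMeasurable, hmap, hIF]
  have part1 : (∫ ω, iP (X ω) (X ω + Z ω)) = C := by rw [hcomp]; exact hEP
  -- squared terms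
  have j1 : Integrable (fun p : ℝ×ℝ => (2*C*a)*(p.1^2*p.2^0)) (ν1.prod ν2) := (key 2 0).const_mul _
  have j2 : Integrable (fun p : ℝ×ℝ => (2*C*bb)*(p.1^1*p.2^1)) (ν1.prod ν2) := (key 1 1).const_mul _
  have j3 : Integrable (fun p : ℝ×ℝ => (2*C*c)*(p.1^0*p.2^2)) (ν1.prod ν2) := (key 0 2).const_mul _
  have j4 : Integrable (fun p : ℝ×ℝ => (a^2)*(p.1^4*p.2^0)) (ν1.prod ν2) := (key 4 0).const_mul _
  have j5 : Integrable (fun p : ℝ×ℝ => (2*a*bb)*(p.1^3*p.2^1)) (ν1.prod ν2) := (key 3 1).const_mul _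
  have j6 : Integrable (fun p : ℝ×ℝ => (bb^2+2*a*c)*(p.1^2*p.2^2)) (ν1.prod ν2) := (key 2 2).const_mul _
  have j7 : Integrable (fun p : ℝ×ℝ => (2*bb*c)*(p.1^1*p.2^3)) (ν1.prod ν2) := (key 1 3).const_mul _
  have j8 : Integrable (fun p : ℝ×ℝ => (c^2)*(p.1^0*p.2^4)) (ν1.prod ν2) := (key 0 4).const_mul _
  have r7 : Integrable (fun p : ℝ×ℝ => (2*bb*c)*(p.1^1*p.2^3) + (c^2)*(p.1^0*p.2^4)) (ν1.prod ν2) := j7.add j8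
  have r6 : Integrable (fun p : ℝ×ℝ => (bb^2+2*a*c)*(p.1^2*p.2^2) + ((2*bb*c)*(p.1^1*p.2^3) + (c^2)*(p.1^0*p.2^4))) (ν1.prod ν2) := j6.add r7
  have r5 : Integrable (fun p : ℝ×ℝ => (2*a*bb)*(p.1^3*p.2^1) + ((bb^2+2*a*c)*(p.1^2*p.2^2) + ((2*bb*c)*(p.1^1*p.2^3) + (c^2)*(p.1^0*p.2^4)))) (ν1.prod ν2) := j5.add r6
  have r4 : Integrable (fun p : ℝ×ℝ => (a^2)*(p.1^4*p.2^0) + ((2*a*bb)*(p.1^3*p.2^1) + ((bb^2+2*a*c)*(p.1^2*p.2^2) + ((2*bb*c)*(p.1^1*p.2^3) + (c^2)*(p.1^0*p.2^4))))) (ν1.prod ν2) := j4.add r5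
  have r3 : Integrable (fun p : ℝ×ℝ => (2*C*c)*(p.1^0*p.2^2) + ((a^2)*(p.1^4*p.2^0) + ((2*a*bb)*(p.1^3*p.2^1) + ((bb^2+2*a*c)*(p.1^2*p.2^2) + ((2*bb*c)*(p.1^1*p.2^3) + (c^2)*(p.1^0*p.2^4)))))) (ν1.prod ν2) := j3.add r4
  have r2 : Integrable (fun p : ℝ×ℝ => (2*C*bb)*(p.1^1*p.2^1) + ((2*C*c)*(p.1^0*p.2^2) + ((a^2)*(p.1^4*p.2^0) + ((2*a*bb)*(p.1^3*p.2^1) + ((bb^2+2*a*c)*(p.1^2*p.2^2) + ((2*bb*c)*(p.1^1*p.2^3) + (c^2)*(p.1^0*p.2^4))))))) (ν1.prod ν2) := j2.add r3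
  have r1 : Integrable (fun p : ℝ×ℝ => (2*C*a)*(p.1^2*p.2^0) + ((2*C*bb)*(p.1^1*p.2^1) + ((2*C*c)*(p.1^0*p.2^2) + ((a^2)*(p.1^4*p.2^0) + ((2*a*bb)*(p.1^3*p.2^1) + ((bb^2+2*a*c)*(p.1^2*p.2^2) + ((2*bb*c)*(p.1^1*p.2^3) + (c^2)*(p.1^0*p.2^4)))))))) (ν1.prod ν2) := j1.add r2
  have hsq : (fun p : ℝ×ℝ => (F p)^2) = fun p : ℝ×ℝ => C^2 + ((2*C*a)*(p.1^2*p.2^0) + ((2*C*bb)*(p.1^1*p.2^1) + ((2*C*c)*(p.1^0*p.2^2) + ((a^2)*(p.1^4*p.2^0) + ((2*a*bb)*(p.1^3*p.2^1) + ((bb^2+2*a*c)*(p.1^2*p.2^2) + ((2*bb*c)*(p.1^1*p.2^3) + (c^2)*(p.1^0*p.2^4)))))))) := by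
    funext p
    simp only [hF]
    ring
  have hF2int : Integrable (fun p : ℝ×ℝ => (F p)^2) (ν1.prod ν2) := by
    rw [hsq]; exact (integrable_const (C^2)).add r1
  have hIF2 : ∫ p, (F p)^2 ∂(ν1.prod ν2)
      = C^2 + (2*C*a*P + (2*C*c + (a^2*(3*P^2) + ((bb^2+2*a*c)*P + c^2*3)))) := by
    rw [hsq]
    rw [integral_add (integrable_const (C^2)) r1, integral_add j1 r2, integral_add j2 r3,
      integral_add j3 r4, integral_add j4 r5, integral_add j5 r6, integral_add j6 r7,
      integral_add j7 j8,
      awgn_mono_int, awgn_mono_int, awgn_mono_int, awgn_mono_int,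
      awgn_mono_int, awgn_mono_int, awgn_mono_int, awgn_mono_int,
      integral_const]
    simp only [pow_zero, pow_one, measure_univ, probReal_univ, ENNReal.toReal_one, smul_eq_mul, one_mul,
      mul_one, hν1, hν2, mP1, mP2, mP3, mP4, m11, m12, m13, m14, integral_const, mul_zero, zero_mul,
      zero_add, add_zero]
    ring
  -- memℒp and variance
  have hMem2 : MemLp F 2 (ν1.prod ν2) :=
    (memLp_two_iff_integrable_sq hFmeas.aestronglyMeasurable).2 hF2int
  have hMem : MemLp (fun ω => F (X ω, Z ω)) 2 (ℙ : Measure Ω) := by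
    rw [← hmap] at hMem2
    exact (memLp_map_measure_iff hFmeas.aestronglyMeasurable hpairm.aemeasurable).1 hMem2
  have hEP2 : ∫ ω, (F (X ω, Z ω))^2
      = C^2 + (2*C*a*P + (2*C*c + (a^2*(3*P^2) + ((bb^2+2*a*c)*P + c^2*3)))) := by
    rw [show (fun ω => (F (X ω, Z ω))^2) = fun ω => (fun p : ℝ×ℝ => (F p)^2) (X ω, Z ω) from rfl,
      ← integral_map hpairm.aemeasurable hF2meas.aestronglyMeasurable, hmap, hIF2]
  have part2 : variance (fun ω => iP (X ω) (X ω + Z ω)) (ℙ : Measure Ω) = P/(1+P) := by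
    rw [hcomp, variance_eq_sub hMem]
    simp only [Pi.pow_apply]
    rw [hEP2, hEP]
    rw [hc, ha, hbb]
    field_simp
    ring
  exact ⟨part1, part2⟩
end

section
/- Fix P₁ > 0 and P₂ > 0 and define i₃ : ℝ³ → ℝ by i₃(x₁, x₂, y) := (1/2)·log(1 + P₁ + P₂) − (y − x₁ − x₂)²/2 + y²/(2(1 + P₁ + P₂)). Let X₁ ~ N(0, P₁), X₂ ~ N(0, P₂), and Z ~ N(0, 1) be mutually independent and set Y = X₁ + X₂ + Z. Then E[i₃(X₁, X₂, Y)] = (1/2)·log(1 + P₁ + P₂) and Var(i₃(X₁, X₂, Y)) = (P₁ + P₂)/(1 + P₁ + P₂). -/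
open MeasureTheory Real Filter Set
open scoped NNReal ENNReal

namespace GaussMAC

lemma integral_deriv_eq_zero (f f' : ℝ → ℝ) (hderiv : ∀ x, HasDerivAt f (f' x) x)
    (hint : Integrable f') (htop : Tendsto f atTop (nhds 0))
    (hbot : Tendsto f atBot (nhds 0)) : ∫ x, f' x = 0 := by
  have h1 : ∫ x in Ioi (0:ℝ), f' x = 0 - f 0 :=
    MeasureTheory.integral_Ioi_of_hasDerivAt_of_tendsto' (fun x _ => hderiv x)
      hint.integrableOn htop
  have h2 : ∫ x in Iic (0:ℝ), f' x = f 0 - 0 :=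
    MeasureTheory.integral_Iic_of_hasDerivAt_of_tendsto' (fun x _ => hderiv x)
      hint.integrableOn hbot
  rw [← intervalIntegral.integral_Iic_add_Ioi (b := (0:ℝ)) hint.integrableOn hint.integrableOn, h1, h2]
  ring

lemma integrable_pow_exp {b : ℝ} (hb : 0 < b) (n : ℕ) :
    Integrable fun x : ℝ => x ^ n * Real.exp (-b * x ^ 2) := by
  have h := integrable_rpow_mul_exp_neg_mul_sq hb
    (show (-1:ℝ) < (n:ℝ) from lt_of_lt_of_le neg_one_lt_zero (Nat.cast_nonneg n))
  simpa [Real.rpow_natCast] using h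

lemma tendsto_pow_exp_top {b : ℝ} (hb : 0 < b) (n : ℕ) :
    Tendsto (fun x : ℝ => x ^ n * Real.exp (-b * x ^ 2)) atTop (nhds 0) := by
  have h := rpow_mul_exp_neg_mul_sq_isLittleO_exp_neg hb (n : ℝ)
  have h2 : Tendsto (fun x : ℝ => Real.exp (-(1/2) * x)) atTop (nhds 0) := by
    rw [Real.tendsto_exp_comp_nhds_zero]
    exact (tendsto_const_mul_atBot_of_neg (by norm_num)).mpr tendsto_id
  have := h.isBigO.trans_tendsto h2
  simpa [Real.rpow_natCast] using this

lemma tendsto_pow_exp_bot {b : ℝ} (hb : 0 < b) (n : ℕ) :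
    Tendsto (fun x : ℝ => x ^ n * Real.exp (-b * x ^ 2)) atBot (nhds 0) := by
  have h := ((tendsto_pow_exp_top hb n).comp tendsto_neg_atBot_atTop).const_mul ((-1:ℝ)^n)
  rw [mul_zero] at h
  refine h.congr fun x => ?_
  simp only [Function.comp]
  rw [neg_sq, ← mul_assoc, ← mul_pow]
  norm_num


lemma integral_pow_one_exp {b : ℝ} (hb : 0 < b) :
    ∫ x : ℝ, x ^ 1 * Real.exp (-b * x ^ 2) = 0 := by
  have hb' : b ≠ 0 := hb.ne'
  apply integral_deriv_eq_zero (fun x : ℝ => -(2*b)⁻¹ * Real.exp (-b * x ^ 2))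
  · intro x
    have h2 : HasDerivAt (fun x : ℝ => Real.exp (-b * x^2))
        (Real.exp (-b*x^2) * (-b * (2*x))) x := by
      have : HasDerivAt (fun x : ℝ => -b * x^2) (-b * (2*x)) x := by
        simpa using ((hasDerivAt_pow 2 x).const_mul (-b))
      exact this.exp
    have := h2.const_mul (-(2*b)⁻¹)
    refine this.congr_deriv ?_
    field_simp
  · exact integrable_pow_exp hb 1
  · simpa using (tendsto_pow_exp_top hb 0).const_mul (-(2*b)⁻¹)
  · simpa using (tendsto_pow_exp_bot hb 0).const_mul (-(2*b)⁻¹)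

lemma integral_pow_exp_rec {b : ℝ} (hb : 0 < b) (n : ℕ) :
    ∫ x : ℝ, x ^ (n+2) * Real.exp (-b * x ^ 2)
      = ((n+1 : ℝ)/(2*b)) * ∫ x : ℝ, x ^ n * Real.exp (-b * x ^ 2) := by
  have hb' : b ≠ 0 := hb.ne'
  have hder : ∀ x : ℝ, HasDerivAt (fun x : ℝ => -(2*b)⁻¹ * (x ^ (n+1) * Real.exp (-b * x^2)))
      (x ^ (n+2) * Real.exp (-b*x^2) - ((n+1:ℝ)/(2*b)) * (x ^ n * Real.exp (-b*x^2))) x := by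
    intro x
    have h1 : HasDerivAt (fun x : ℝ => x ^ (n+1)) (((n:ℝ)+1) * x ^ n) x := by
      simpa using hasDerivAt_pow (n+1) x
    have h2 : HasDerivAt (fun x : ℝ => Real.exp (-b * x^2))
        (Real.exp (-b*x^2) * (-b * (2*x))) x := by
      have : HasDerivAt (fun x : ℝ => -b * x^2) (-b * (2*x)) x := by
        simpa using ((hasDerivAt_pow 2 x).const_mul (-b))
      exact this.exp
    have := (h1.mul h2).const_mul (-(2*b)⁻¹)
    refine this.congr_deriv ?_
    field_simp
    ring
  have hint : Integrable (fun x : ℝ => x ^ (n+2) * Real.exp (-b*x^2)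
      - ((n+1:ℝ)/(2*b)) * (x^n * Real.exp (-b*x^2))) :=
    (integrable_pow_exp hb (n+2)).sub ((integrable_pow_exp hb n).const_mul _)
  have htop : Tendsto (fun x : ℝ => -(2*b)⁻¹ * (x ^ (n+1) * Real.exp (-b * x^2)))
      atTop (nhds 0) := by
    simpa using (tendsto_pow_exp_top hb (n+1)).const_mul (-(2*b)⁻¹)
  have hbot : Tendsto (fun x : ℝ => -(2*b)⁻¹ * (x ^ (n+1) * Real.exp (-b * x^2)))
      atBot (nhds 0) := by
    simpa using (tendsto_pow_exp_bot hb (n+1)).const_mul (-(2*b)⁻¹)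
  have h0 := integral_deriv_eq_zero _ _ hder hint htop hbot
  rw [integral_sub (integrable_pow_exp hb (n+2)) ((integrable_pow_exp hb n).const_mul _),
    MeasureTheory.integral_const_mul] at h0
  linarith


open ProbabilityTheory

lemma gaussian_integral_transfer {v : ℝ≥0} (hv : v ≠ 0) (g : ℝ → ℝ) :
    ∫ x, g x ∂(gaussianReal 0 v) = ∫ x, gaussianPDFReal 0 v x * g x := by
  rw [gaussianReal_of_var_ne_zero _ hv]
  have hpdf : gaussianPDF 0 v
      = fun x => ((Real.toNNReal (gaussianPDFReal 0 v x) : ℝ≥0) : ℝ≥0∞) := rfl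
  rw [hpdf, integral_withDensity_eq_integral_smul (measurable_gaussianPDFReal 0 v).real_toNNReal g]
  congr 1
  ext x
  simp [NNReal.smul_def, Real.coe_toNNReal _ (gaussianPDFReal_nonneg 0 v x)]

lemma gaussian_integrable_transfer {v : ℝ≥0} (hv : v ≠ 0) {g : ℝ → ℝ}
    (h : Integrable (fun x => gaussianPDFReal 0 v x * g x)) :
    Integrable g (gaussianReal 0 v) := by
  rw [gaussianReal_of_var_ne_zero _ hv]
  have hpdf : gaussianPDF 0 v
      = fun x => ((Real.toNNReal (gaussianPDFReal 0 v x) : ℝ≥0) : ℝ≥0∞) := rfl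
  rw [hpdf, integrable_withDensity_iff_integrable_smul
    (measurable_gaussianPDFReal 0 v).real_toNNReal]
  refine h.congr (Filter.Eventually.of_forall fun x => ?_)
  simp [NNReal.smul_def, Real.coe_toNNReal _ (gaussianPDFReal_nonneg 0 v x)]

lemma gaussian_pdf_eq {v : ℝ≥0} (hv : v ≠ 0) (n : ℕ) (x : ℝ) :
    gaussianPDFReal 0 v x * x ^ n
      = (Real.sqrt (2 * Real.pi * v))⁻¹ * (x ^ n * Real.exp (-(2*(v:ℝ))⁻¹ * x ^ 2)) := by
  have hv' : (0:ℝ) < v := lt_of_le_of_ne (v.coe_nonneg) (by exact_mod_cast (Ne.symm hv))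
  rw [gaussianPDFReal]
  rw [show -(x - 0)^2 / (2*(v:ℝ)) = -(2*(v:ℝ))⁻¹ * x^2 by field_simp; ring]
  ring

lemma integrable_pow_gaussian {v : ℝ≥0} (hv : v ≠ 0) (n : ℕ) :
    Integrable (fun x => x ^ n) (gaussianReal 0 v) := by
  have hv' : (0:ℝ) < v := lt_of_le_of_ne (v.coe_nonneg) (by exact_mod_cast (Ne.symm hv))
  have hb : (0:ℝ) < (2*(v:ℝ))⁻¹ := by positivity
  apply gaussian_integrable_transfer hv
  have := (integrable_pow_exp hb n).const_mul (Real.sqrt (2 * Real.pi * v))⁻¹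
  refine this.congr (Filter.Eventually.of_forall fun x => ?_)
  exact (gaussian_pdf_eq hv n x).symm

lemma gaussian_moment_eq {v : ℝ≥0} (hv : v ≠ 0) (n : ℕ) :
    ∫ x, x ^ n ∂(gaussianReal 0 v)
      = (Real.sqrt (2 * Real.pi * v))⁻¹ * ∫ x, x ^ n * Real.exp (-(2*(v:ℝ))⁻¹ * x ^ 2) := by
  rw [gaussian_integral_transfer hv]
  rw [show (fun x => gaussianPDFReal 0 v x * x ^ n)
      = fun x => (Real.sqrt (2 * Real.pi * v))⁻¹ * (x ^ n * Real.exp (-(2*(v:ℝ))⁻¹ * x ^ 2))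
    from funext (gaussian_pdf_eq hv n), MeasureTheory.integral_const_mul]

lemma gaussian_m0 (v : ℝ≥0) : ∫ x : ℝ, x ^ 0 ∂(gaussianReal 0 v) = 1 := by
  simp

lemma gaussian_m1 {v : ℝ≥0} (hv : v ≠ 0) : ∫ x : ℝ, x ^ 1 ∂(gaussianReal 0 v) = 0 := by
  have hv' : (0:ℝ) < v := lt_of_le_of_ne (v.coe_nonneg) (by exact_mod_cast (Ne.symm hv))
  have hb : (0:ℝ) < (2*(v:ℝ))⁻¹ := by positivity
  rw [gaussian_moment_eq hv 1, integral_pow_one_exp hb, mul_zero]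

lemma gaussian_m2 {v : ℝ≥0} (hv : v ≠ 0) : ∫ x : ℝ, x ^ 2 ∂(gaussianReal 0 v) = v := by
  have hv' : (0:ℝ) < v := lt_of_le_of_ne (v.coe_nonneg) (by exact_mod_cast (Ne.symm hv))
  have hb : (0:ℝ) < (2*(v:ℝ))⁻¹ := by positivity
  have h0 : (Real.sqrt (2 * Real.pi * v))⁻¹
      * ∫ x : ℝ, x ^ 0 * Real.exp (-(2*(v:ℝ))⁻¹ * x ^ 2) = 1 := by
    rw [← gaussian_moment_eq hv 0, gaussian_m0]
  have hrec : ∫ x : ℝ, x ^ 2 * Real.exp (-(2*(v:ℝ))⁻¹ * x ^ 2)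
      = ((0+1:ℝ)/(2*(2*(v:ℝ))⁻¹)) * ∫ x : ℝ, x ^ 0 * Real.exp (-(2*(v:ℝ))⁻¹ * x ^ 2) := by
    exact_mod_cast integral_pow_exp_rec hb 0
  have hk : ((0+1:ℝ))/(2*(2*(v:ℝ))⁻¹) = v := by field_simp; norm_num
  rw [gaussian_moment_eq hv 2, hrec, hk]
  calc (Real.sqrt (2 * Real.pi * v))⁻¹
      * ((v:ℝ) * ∫ x : ℝ, x ^ 0 * Real.exp (-(2*(v:ℝ))⁻¹ * x ^ 2))
      = (v:ℝ) * ((Real.sqrt (2 * Real.pi * v))⁻¹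
        * ∫ x : ℝ, x ^ 0 * Real.exp (-(2*(v:ℝ))⁻¹ * x ^ 2)) := by ring
    _ = v := by rw [h0, mul_one]

lemma gaussian_m3 {v : ℝ≥0} (hv : v ≠ 0) : ∫ x : ℝ, x ^ 3 ∂(gaussianReal 0 v) = 0 := by
  have hv' : (0:ℝ) < v := lt_of_le_of_ne (v.coe_nonneg) (by exact_mod_cast (Ne.symm hv))
  have hb : (0:ℝ) < (2*(v:ℝ))⁻¹ := by positivity
  have hrec : ∫ x : ℝ, x ^ 3 * Real.exp (-(2*(v:ℝ))⁻¹ * x ^ 2)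
      = ((1+1:ℝ)/(2*(2*(v:ℝ))⁻¹)) * ∫ x : ℝ, x ^ 1 * Real.exp (-(2*(v:ℝ))⁻¹ * x ^ 2) := by
    exact_mod_cast integral_pow_exp_rec hb 1
  rw [gaussian_moment_eq hv 3, hrec, integral_pow_one_exp hb]
  ring

lemma gaussian_m4 {v : ℝ≥0} (hv : v ≠ 0) :
    ∫ x : ℝ, x ^ 4 ∂(gaussianReal 0 v) = 3 * (v:ℝ)^2 := by
  have hv' : (0:ℝ) < v := lt_of_le_of_ne (v.coe_nonneg) (by exact_mod_cast (Ne.symm hv))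
  have hb : (0:ℝ) < (2*(v:ℝ))⁻¹ := by positivity
  have hrec : ∫ x : ℝ, x ^ 4 * Real.exp (-(2*(v:ℝ))⁻¹ * x ^ 2)
      = ((2+1:ℝ)/(2*(2*(v:ℝ))⁻¹)) * ∫ x : ℝ, x ^ 2 * Real.exp (-(2*(v:ℝ))⁻¹ * x ^ 2) := by
    exact_mod_cast integral_pow_exp_rec hb 2
  have h2 : (Real.sqrt (2 * Real.pi * v))⁻¹
      * ∫ x : ℝ, x ^ 2 * Real.exp (-(2*(v:ℝ))⁻¹ * x ^ 2) = v := by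
    rw [← gaussian_moment_eq hv 2, gaussian_m2 hv]
  have hk : ((2+1:ℝ))/(2*(2*(v:ℝ))⁻¹) = 3 * v := by field_simp; ring
  rw [gaussian_moment_eq hv 4, hrec, hk]
  calc (Real.sqrt (2 * Real.pi * v))⁻¹
      * (3 * (v:ℝ) * ∫ x : ℝ, x ^ 2 * Real.exp (-(2*(v:ℝ))⁻¹ * x ^ 2))
      = 3 * (v:ℝ) * ((Real.sqrt (2 * Real.pi * v))⁻¹
        * ∫ x : ℝ, x ^ 2 * Real.exp (-(2*(v:ℝ))⁻¹ * x ^ 2)) := by ring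
    _ = 3 * (v:ℝ)^2 := by rw [h2]; ring

end GaussMAC

open ProbabilityTheory in
set_option maxHeartbeats 2000000 in
/-- For the Gaussian MAC `Y = X₁ + X₂ + Z` with `X₁ ~ N(0, P₁)`,
`X₂ ~ N(0, P₂)`, `Z ~ N(0, 1)` mutually independent, the sum-rate information density
`i₃(x₁, x₂, y) = (1/2) log (1 + P₁ + P₂) − (y − x₁ − x₂)²/2 + y²/(2(1 + P₁ + P₂))`
satisfies `E[i₃(X₁, X₂, Y)] = (1/2) log (1 + P₁ + P₂)` and
`Var(i₃(X₁, X₂, Y)) = (P₁ + P₂)/(1 + P₁ + P₂)`. -/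
theorem gaussian_mac_sum_information_density_moments
    {Ω : Type*} [MeasureSpace Ω] [IsProbabilityMeasure (ℙ : Measure Ω)]
    (P₁ P₂ : ℝ) (hP₁ : 0 < P₁) (hP₂ : 0 < P₂)
    (X₁ X₂ Z : Ω → ℝ) (hX₁ : Measurable X₁) (hX₂ : Measurable X₂) (hZ : Measurable Z)
    (hX₁law : Measure.map X₁ (ℙ : Measure Ω) = gaussianReal 0 (Real.toNNReal P₁))
    (hX₂law : Measure.map X₂ (ℙ : Measure Ω) = gaussianReal 0 (Real.toNNReal P₂))
    (hZlaw : Measure.map Z (ℙ : Measure Ω) = gaussianReal 0 1)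
    (hindep : iIndepFun
      ![X₁, X₂, Z] (ℙ : Measure Ω))
    (i₃ : ℝ → ℝ → ℝ → ℝ)
    (hi₃ : ∀ x₁ x₂ y, i₃ x₁ x₂ y = (1/2) * Real.log (1 + P₁ + P₂)
        - (y - x₁ - x₂)^2/2 + y^2/(2*(1 + P₁ + P₂))) :
    (∫ ω, i₃ (X₁ ω) (X₂ ω) (X₁ ω + X₂ ω + Z ω)) = (1/2) * Real.log (1 + P₁ + P₂) ∧
    variance (fun ω => i₃ (X₁ ω) (X₂ ω) (X₁ ω + X₂ ω + Z ω)) (ℙ : Measure Ω)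
      = (P₁ + P₂) / (1 + P₁ + P₂) := by
  have hS0 : (0:ℝ) < 1 + P₁ + P₂ := by linarith
  set S : ℝ := 1 + P₁ + P₂ with hSdef
  have hv₁ : P₁.toNNReal ≠ 0 := (Real.toNNReal_pos.mpr hP₁).ne'
  have hv₂ : P₂.toNNReal ≠ 0 := (Real.toNNReal_pos.mpr hP₂).ne'
  have hv₃ : (1:ℝ≥0) ≠ 0 := one_ne_zero
  have hc₁ : ((P₁.toNNReal : ℝ≥0) : ℝ) = P₁ := Real.coe_toNNReal _ hP₁.le
  have hc₂ : ((P₂.toNNReal : ℝ≥0) : ℝ) = P₂ := Real.coe_toNNReal _ hP₂.le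
  set μ₁ : Measure ℝ := gaussianReal 0 P₁.toNNReal with hμ₁def
  set μ₂ : Measure ℝ := gaussianReal 0 P₂.toNNReal with hμ₂def
  set μ₃ : Measure ℝ := gaussianReal 0 1 with hμ₃def
  set ρ : Measure (ℝ × ℝ × ℝ) := μ₁.prod (μ₂.prod μ₃) with hρdef
  -- one-dimensional moments
  have A0 : ∫ x, x ^ 0 ∂μ₁ = 1 := GaussMAC.gaussian_m0 _
  have A1 : ∫ x, x ^ 1 ∂μ₁ = 0 := by rw [hμ₁def, GaussMAC.gaussian_m1 hv₁]
  have A2 : ∫ x, x ^ 2 ∂μ₁ = P₁ := by rw [hμ₁def, GaussMAC.gaussian_m2 hv₁]; exact hc₁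
  have A3 : ∫ x, x ^ 3 ∂μ₁ = 0 := by rw [hμ₁def, GaussMAC.gaussian_m3 hv₁]
  have A4 : ∫ x, x ^ 4 ∂μ₁ = 3 * P₁^2 := by rw [hμ₁def, GaussMAC.gaussian_m4 hv₁, hc₁]
  have B0 : ∫ x, x ^ 0 ∂μ₂ = 1 := GaussMAC.gaussian_m0 _
  have B1 : ∫ x, x ^ 1 ∂μ₂ = 0 := by rw [hμ₂def, GaussMAC.gaussian_m1 hv₂]
  have B2 : ∫ x, x ^ 2 ∂μ₂ = P₂ := by rw [hμ₂def, GaussMAC.gaussian_m2 hv₂]; exact hc₂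
  have B3 : ∫ x, x ^ 3 ∂μ₂ = 0 := by rw [hμ₂def, GaussMAC.gaussian_m3 hv₂]
  have B4 : ∫ x, x ^ 4 ∂μ₂ = 3 * P₂^2 := by rw [hμ₂def, GaussMAC.gaussian_m4 hv₂, hc₂]
  have N0 : ∫ x, x ^ 0 ∂μ₃ = 1 := GaussMAC.gaussian_m0 _
  have N1 : ∫ x, x ^ 1 ∂μ₃ = 0 := by rw [hμ₃def, GaussMAC.gaussian_m1 hv₃]
  have N2 : ∫ x, x ^ 2 ∂μ₃ = 1 := by rw [hμ₃def, GaussMAC.gaussian_m2 hv₃]; norm_num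
  have N3 : ∫ x, x ^ 3 ∂μ₃ = 0 := by rw [hμ₃def, GaussMAC.gaussian_m3 hv₃]
  have N4 : ∫ x, x ^ 4 ∂μ₃ = 3 := by rw [hμ₃def, GaussMAC.gaussian_m4 hv₃]; norm_num
  -- monomial integrals over the product measure
  have hmono_int : ∀ i j k : ℕ,
      Integrable (fun p : ℝ × ℝ × ℝ => p.1 ^ i * (p.2.1 ^ j * p.2.2 ^ k)) ρ := by
    intro i j k
    exact (GaussMAC.integrable_pow_gaussian hv₁ i).mul_prod
      ((GaussMAC.integrable_pow_gaussian hv₂ j).mul_prod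
        (GaussMAC.integrable_pow_gaussian hv₃ k))
  have hmono_val : ∀ i j k : ℕ,
      (∫ p : ℝ × ℝ × ℝ, p.1 ^ i * (p.2.1 ^ j * p.2.2 ^ k) ∂ρ)
        = (∫ x, x ^ i ∂μ₁) * ((∫ x, x ^ j ∂μ₂) * (∫ x, x ^ k ∂μ₃)) := by
    intro i j k
    rw [hρdef,
      integral_prod_mul (f := fun x : ℝ => x ^ i) (g := fun q : ℝ × ℝ => q.1 ^ j * q.2 ^ k),
      integral_prod_mul (f := fun x : ℝ => x ^ j) (g := fun x : ℝ => x ^ k)]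
  -- joint law
  have hmeasv : ∀ i, Measurable (![X₁, X₂, Z] i) := by
    intro i; fin_cases i
    · exact hX₁
    · exact hX₂
    · exact hZ
  have h23 : IndepFun X₂ Z ℙ := by
    have h := hindep.indepFun (show (1:Fin 3) ≠ 2 by decide)
    simpa using h
  have hmap23 : Measure.map (fun ω => (X₂ ω, Z ω)) ℙ = μ₂.prod μ₃ := by
    rw [(indepFun_iff_map_prod_eq_prod_map_map hX₂.aemeasurable hZ.aemeasurable).mp h23,
      hX₂law, hZlaw]
  have h123 : IndepFun X₁ (fun ω => (X₂ ω, Z ω)) ℙ := by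
    have h := hindep.indepFun_prodMk hmeasv 1 2 0 (by decide) (by decide)
    simpa using h.symm
  have hVmeas : Measurable (fun ω => (X₁ ω, X₂ ω, Z ω)) := hX₁.prodMk (hX₂.prodMk hZ)
  have hmapV : Measure.map (fun ω => (X₁ ω, X₂ ω, Z ω)) ℙ = ρ := by
    rw [(indepFun_iff_map_prod_eq_prod_map_map hX₁.aemeasurable
      (hX₂.prodMk hZ).aemeasurable).mp h123, hX₁law, hmap23]
  -- the density as a function on ℝ³
  set φ : ℝ × ℝ × ℝ → ℝ :=
    fun p => 1/2 * Real.log S + (2*S)⁻¹ * (p.1 + p.2.1 + p.2.2)^2 - p.2.2^2/2 with hφdef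
  have hφmeas : Measurable φ := by rw [hφdef]; fun_prop
  have hcomp : ∀ ω, i₃ (X₁ ω) (X₂ ω) (X₁ ω + X₂ ω + Z ω) = φ (X₁ ω, X₂ ω, Z ω) := by
    intro ω; rw [hi₃]; simp only [hφdef]; ring
  have key : ∀ F : ℝ × ℝ × ℝ → ℝ, Measurable F →
      ∫ p, F p ∂ρ = ∫ ω, F (X₁ ω, X₂ ω, Z ω) := by
    intro F hF
    rw [← hmapV, integral_map hVmeas.aemeasurable hF.aestronglyMeasurable]
  have keyInt : ∀ F : ℝ × ℝ × ℝ → ℝ, Measurable F → Integrable F ρ →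
      Integrable (fun ω => F (X₁ ω, X₂ ω, Z ω)) ℙ := by
    intro F hF hFi
    exact (integrable_map_measure hF.aestronglyMeasurable hVmeas.aemeasurable).mp
      (by rwa [hmapV])
  -- expansion of φ
  have hφexp : ∀ p : ℝ × ℝ × ℝ, φ p =
      (1/2 * Real.log S) * (p.1 ^ 0 * (p.2.1 ^ 0 * p.2.2 ^ 0))
      + (2*S)⁻¹ * (p.1 ^ 2 * (p.2.1 ^ 0 * p.2.2 ^ 0))
      + (2*S)⁻¹ * (p.1 ^ 0 * (p.2.1 ^ 2 * p.2.2 ^ 0))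
      + ((2*S)⁻¹ - 1/2) * (p.1 ^ 0 * (p.2.1 ^ 0 * p.2.2 ^ 2))
      + (2*(2*S)⁻¹) * (p.1 ^ 1 * (p.2.1 ^ 1 * p.2.2 ^ 0))
      + (2*(2*S)⁻¹) * (p.1 ^ 1 * (p.2.1 ^ 0 * p.2.2 ^ 1))
      + (2*(2*S)⁻¹) * (p.1 ^ 0 * (p.2.1 ^ 1 * p.2.2 ^ 1)) := by
    intro p; simp only [hφdef]; ring
  have hMI1 : Integrable (fun p : ℝ × ℝ × ℝ => (1/2 * Real.log S) * (p.1 ^ 0 * (p.2.1 ^ 0 * p.2.2 ^ 0))) ρ :=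
    ((hmono_int 0 0 0).const_mul (1/2 * Real.log S))
  have hMI2 : Integrable (fun p : ℝ × ℝ × ℝ => (1/2 * Real.log S) * (p.1 ^ 0 * (p.2.1 ^ 0 * p.2.2 ^ 0)) + (2*S)⁻¹ * (p.1 ^ 2 * (p.2.1 ^ 0 * p.2.2 ^ 0))) ρ :=
    hMI1.add ((hmono_int 2 0 0).const_mul (2*S)⁻¹)
  have hMI3 : Integrable (fun p : ℝ × ℝ × ℝ => (1/2 * Real.log S) * (p.1 ^ 0 * (p.2.1 ^ 0 * p.2.2 ^ 0)) + (2*S)⁻¹ * (p.1 ^ 2 * (p.2.1 ^ 0 * p.2.2 ^ 0)) + (2*S)⁻¹ * (p.1 ^ 0 * (p.2.1 ^ 2 * p.2.2 ^ 0))) ρ :=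
    hMI2.add ((hmono_int 0 2 0).const_mul (2*S)⁻¹)
  have hMI4 : Integrable (fun p : ℝ × ℝ × ℝ => (1/2 * Real.log S) * (p.1 ^ 0 * (p.2.1 ^ 0 * p.2.2 ^ 0)) + (2*S)⁻¹ * (p.1 ^ 2 * (p.2.1 ^ 0 * p.2.2 ^ 0)) + (2*S)⁻¹ * (p.1 ^ 0 * (p.2.1 ^ 2 * p.2.2 ^ 0)) + ((2*S)⁻¹ - 1/2) * (p.1 ^ 0 * (p.2.1 ^ 0 * p.2.2 ^ 2))) ρ :=
    hMI3.add ((hmono_int 0 0 2).const_mul ((2*S)⁻¹ - 1/2))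
  have hMI5 : Integrable (fun p : ℝ × ℝ × ℝ => (1/2 * Real.log S) * (p.1 ^ 0 * (p.2.1 ^ 0 * p.2.2 ^ 0)) + (2*S)⁻¹ * (p.1 ^ 2 * (p.2.1 ^ 0 * p.2.2 ^ 0)) + (2*S)⁻¹ * (p.1 ^ 0 * (p.2.1 ^ 2 * p.2.2 ^ 0)) + ((2*S)⁻¹ - 1/2) * (p.1 ^ 0 * (p.2.1 ^ 0 * p.2.2 ^ 2)) + (2*(2*S)⁻¹) * (p.1 ^ 1 * (p.2.1 ^ 1 * p.2.2 ^ 0))) ρ :=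
    hMI4.add ((hmono_int 1 1 0).const_mul (2*(2*S)⁻¹))
  have hMI6 : Integrable (fun p : ℝ × ℝ × ℝ => (1/2 * Real.log S) * (p.1 ^ 0 * (p.2.1 ^ 0 * p.2.2 ^ 0)) + (2*S)⁻¹ * (p.1 ^ 2 * (p.2.1 ^ 0 * p.2.2 ^ 0)) + (2*S)⁻¹ * (p.1 ^ 0 * (p.2.1 ^ 2 * p.2.2 ^ 0)) + ((2*S)⁻¹ - 1/2) * (p.1 ^ 0 * (p.2.1 ^ 0 * p.2.2 ^ 2)) + (2*(2*S)⁻¹) * (p.1 ^ 1 * (p.2.1 ^ 1 * p.2.2 ^ 0)) + (2*(2*S)⁻¹) * (p.1 ^ 1 * (p.2.1 ^ 0 * p.2.2 ^ 1))) ρ :=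
    hMI5.add ((hmono_int 1 0 1).const_mul (2*(2*S)⁻¹))
  have hMI7 : Integrable (fun p : ℝ × ℝ × ℝ => (1/2 * Real.log S) * (p.1 ^ 0 * (p.2.1 ^ 0 * p.2.2 ^ 0)) + (2*S)⁻¹ * (p.1 ^ 2 * (p.2.1 ^ 0 * p.2.2 ^ 0)) + (2*S)⁻¹ * (p.1 ^ 0 * (p.2.1 ^ 2 * p.2.2 ^ 0)) + ((2*S)⁻¹ - 1/2) * (p.1 ^ 0 * (p.2.1 ^ 0 * p.2.2 ^ 2)) + (2*(2*S)⁻¹) * (p.1 ^ 1 * (p.2.1 ^ 1 * p.2.2 ^ 0)) + (2*(2*S)⁻¹) * (p.1 ^ 1 * (p.2.1 ^ 0 * p.2.2 ^ 1)) + (2*(2*S)⁻¹) * (p.1 ^ 0 * (p.2.1 ^ 1 * p.2.2 ^ 1))) ρ :=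
    hMI6.add ((hmono_int 0 1 1).const_mul (2*(2*S)⁻¹))
  have hφint : Integrable φ ρ :=
    hMI7.congr (Filter.Eventually.of_forall fun p => (hφexp p).symm)
  have hφval : ∫ p, φ p ∂ρ = 1/2 * Real.log S := by
    rw [integral_congr_ae (Filter.Eventually.of_forall hφexp)]
    rw [integral_add hMI6 ((hmono_int 0 1 1).const_mul (2*(2*S)⁻¹)),
      integral_add hMI5 ((hmono_int 1 0 1).const_mul (2*(2*S)⁻¹)),
      integral_add hMI4 ((hmono_int 1 1 0).const_mul (2*(2*S)⁻¹)),
      integral_add hMI3 ((hmono_int 0 0 2).const_mul ((2*S)⁻¹ - 1/2)),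
      integral_add hMI2 ((hmono_int 0 2 0).const_mul (2*S)⁻¹),
      integral_add hMI1 ((hmono_int 2 0 0).const_mul (2*S)⁻¹)]
    simp only [MeasureTheory.integral_const_mul, hmono_val, A0, A1, A2, A3, A4,
      B0, B1, B2, B3, B4, N0, N1, N2, N3, N4]
    rw [hSdef]
    have h0 : (1:ℝ) + P₁ + P₂ ≠ 0 := by positivity
    field_simp
    ring
  -- expansion of (φ - mean)²
  have hDexp : ∀ p : ℝ × ℝ × ℝ, (φ p - 1/2 * Real.log S)^2 =
      ((2*S)⁻¹^2) * (p.1 ^ 4 * (p.2.1 ^ 0 * p.2.2 ^ 0))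
      + ((2*S)⁻¹^2) * (p.1 ^ 0 * (p.2.1 ^ 4 * p.2.2 ^ 0))
      + ((2*S)⁻¹^2 - (2*S)⁻¹ + 1/4) * (p.1 ^ 0 * (p.2.1 ^ 0 * p.2.2 ^ 4))
      + (4*(2*S)⁻¹^2) * (p.1 ^ 3 * (p.2.1 ^ 1 * p.2.2 ^ 0))
      + (4*(2*S)⁻¹^2) * (p.1 ^ 3 * (p.2.1 ^ 0 * p.2.2 ^ 1))
      + (4*(2*S)⁻¹^2) * (p.1 ^ 1 * (p.2.1 ^ 3 * p.2.2 ^ 0))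
      + (4*(2*S)⁻¹^2) * (p.1 ^ 0 * (p.2.1 ^ 3 * p.2.2 ^ 1))
      + (4*(2*S)⁻¹^2 - 2*(2*S)⁻¹) * (p.1 ^ 1 * (p.2.1 ^ 0 * p.2.2 ^ 3))
      + (4*(2*S)⁻¹^2 - 2*(2*S)⁻¹) * (p.1 ^ 0 * (p.2.1 ^ 1 * p.2.2 ^ 3))
      + (6*(2*S)⁻¹^2) * (p.1 ^ 2 * (p.2.1 ^ 2 * p.2.2 ^ 0))
      + (6*(2*S)⁻¹^2 - (2*S)⁻¹) * (p.1 ^ 2 * (p.2.1 ^ 0 * p.2.2 ^ 2))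
      + (6*(2*S)⁻¹^2 - (2*S)⁻¹) * (p.1 ^ 0 * (p.2.1 ^ 2 * p.2.2 ^ 2))
      + (12*(2*S)⁻¹^2) * (p.1 ^ 2 * (p.2.1 ^ 1 * p.2.2 ^ 1))
      + (12*(2*S)⁻¹^2) * (p.1 ^ 1 * (p.2.1 ^ 2 * p.2.2 ^ 1))
      + (12*(2*S)⁻¹^2 - 2*(2*S)⁻¹) * (p.1 ^ 1 * (p.2.1 ^ 1 * p.2.2 ^ 2)) := by
    intro p; simp only [hφdef]; ring
  have hVI1 : Integrable (fun p : ℝ × ℝ × ℝ => ((2*S)⁻¹^2) * (p.1 ^ 4 * (p.2.1 ^ 0 * p.2.2 ^ 0))) ρ :=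
    ((hmono_int 4 0 0).const_mul ((2*S)⁻¹^2))
  have hVI2 : Integrable (fun p : ℝ × ℝ × ℝ => ((2*S)⁻¹^2) * (p.1 ^ 4 * (p.2.1 ^ 0 * p.2.2 ^ 0)) + ((2*S)⁻¹^2) * (p.1 ^ 0 * (p.2.1 ^ 4 * p.2.2 ^ 0))) ρ :=
    hVI1.add ((hmono_int 0 4 0).const_mul ((2*S)⁻¹^2))
  have hVI3 : Integrable (fun p : ℝ × ℝ × ℝ => ((2*S)⁻¹^2) * (p.1 ^ 4 * (p.2.1 ^ 0 * p.2.2 ^ 0)) + ((2*S)⁻¹^2) * (p.1 ^ 0 * (p.2.1 ^ 4 * p.2.2 ^ 0)) + ((2*S)⁻¹^2 - (2*S)⁻¹ + 1/4) * (p.1 ^ 0 * (p.2.1 ^ 0 * p.2.2 ^ 4))) ρ :=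
    hVI2.add ((hmono_int 0 0 4).const_mul ((2*S)⁻¹^2 - (2*S)⁻¹ + 1/4))
  have hVI4 : Integrable (fun p : ℝ × ℝ × ℝ => ((2*S)⁻¹^2) * (p.1 ^ 4 * (p.2.1 ^ 0 * p.2.2 ^ 0)) + ((2*S)⁻¹^2) * (p.1 ^ 0 * (p.2.1 ^ 4 * p.2.2 ^ 0)) + ((2*S)⁻¹^2 - (2*S)⁻¹ + 1/4) * (p.1 ^ 0 * (p.2.1 ^ 0 * p.2.2 ^ 4)) + (4*(2*S)⁻¹^2) * (p.1 ^ 3 * (p.2.1 ^ 1 * p.2.2 ^ 0))) ρ :=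
    hVI3.add ((hmono_int 3 1 0).const_mul (4*(2*S)⁻¹^2))
  have hVI5 : Integrable (fun p : ℝ × ℝ × ℝ => ((2*S)⁻¹^2) * (p.1 ^ 4 * (p.2.1 ^ 0 * p.2.2 ^ 0)) + ((2*S)⁻¹^2) * (p.1 ^ 0 * (p.2.1 ^ 4 * p.2.2 ^ 0)) + ((2*S)⁻¹^2 - (2*S)⁻¹ + 1/4) * (p.1 ^ 0 * (p.2.1 ^ 0 * p.2.2 ^ 4)) + (4*(2*S)⁻¹^2) * (p.1 ^ 3 * (p.2.1 ^ 1 * p.2.2 ^ 0)) + (4*(2*S)⁻¹^2) * (p.1 ^ 3 * (p.2.1 ^ 0 * p.2.2 ^ 1))) ρ :=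
    hVI4.add ((hmono_int 3 0 1).const_mul (4*(2*S)⁻¹^2))
  have hVI6 : Integrable (fun p : ℝ × ℝ × ℝ => ((2*S)⁻¹^2) * (p.1 ^ 4 * (p.2.1 ^ 0 * p.2.2 ^ 0)) + ((2*S)⁻¹^2) * (p.1 ^ 0 * (p.2.1 ^ 4 * p.2.2 ^ 0)) + ((2*S)⁻¹^2 - (2*S)⁻¹ + 1/4) * (p.1 ^ 0 * (p.2.1 ^ 0 * p.2.2 ^ 4)) + (4*(2*S)⁻¹^2) * (p.1 ^ 3 * (p.2.1 ^ 1 * p.2.2 ^ 0)) + (4*(2*S)⁻¹^2) * (p.1 ^ 3 * (p.2.1 ^ 0 * p.2.2 ^ 1)) + (4*(2*S)⁻¹^2) * (p.1 ^ 1 * (p.2.1 ^ 3 * p.2.2 ^ 0))) ρ :=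
    hVI5.add ((hmono_int 1 3 0).const_mul (4*(2*S)⁻¹^2))
  have hVI7 : Integrable (fun p : ℝ × ℝ × ℝ => ((2*S)⁻¹^2) * (p.1 ^ 4 * (p.2.1 ^ 0 * p.2.2 ^ 0)) + ((2*S)⁻¹^2) * (p.1 ^ 0 * (p.2.1 ^ 4 * p.2.2 ^ 0)) + ((2*S)⁻¹^2 - (2*S)⁻¹ + 1/4) * (p.1 ^ 0 * (p.2.1 ^ 0 * p.2.2 ^ 4)) + (4*(2*S)⁻¹^2) * (p.1 ^ 3 * (p.2.1 ^ 1 * p.2.2 ^ 0)) + (4*(2*S)⁻¹^2) * (p.1 ^ 3 * (p.2.1 ^ 0 * p.2.2 ^ 1)) + (4*(2*S)⁻¹^2) * (p.1 ^ 1 * (p.2.1 ^ 3 * p.2.2 ^ 0)) + (4*(2*S)⁻¹^2) * (p.1 ^ 0 * (p.2.1 ^ 3 * p.2.2 ^ 1))) ρ :=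
    hVI6.add ((hmono_int 0 3 1).const_mul (4*(2*S)⁻¹^2))
  have hVI8 : Integrable (fun p : ℝ × ℝ × ℝ => ((2*S)⁻¹^2) * (p.1 ^ 4 * (p.2.1 ^ 0 * p.2.2 ^ 0)) + ((2*S)⁻¹^2) * (p.1 ^ 0 * (p.2.1 ^ 4 * p.2.2 ^ 0)) + ((2*S)⁻¹^2 - (2*S)⁻¹ + 1/4) * (p.1 ^ 0 * (p.2.1 ^ 0 * p.2.2 ^ 4)) + (4*(2*S)⁻¹^2) * (p.1 ^ 3 * (p.2.1 ^ 1 * p.2.2 ^ 0)) + (4*(2*S)⁻¹^2) * (p.1 ^ 3 * (p.2.1 ^ 0 * p.2.2 ^ 1)) + (4*(2*S)⁻¹^2) * (p.1 ^ 1 * (p.2.1 ^ 3 * p.2.2 ^ 0)) + (4*(2*S)⁻¹^2) * (p.1 ^ 0 * (p.2.1 ^ 3 * p.2.2 ^ 1)) + (4*(2*S)⁻¹^2 - 2*(2*S)⁻¹) * (p.1 ^ 1 * (p.2.1 ^ 0 * p.2.2 ^ 3))) ρ :=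
    hVI7.add ((hmono_int 1 0 3).const_mul (4*(2*S)⁻¹^2 - 2*(2*S)⁻¹))
  have hVI9 : Integrable (fun p : ℝ × ℝ × ℝ => ((2*S)⁻¹^2) * (p.1 ^ 4 * (p.2.1 ^ 0 * p.2.2 ^ 0)) + ((2*S)⁻¹^2) * (p.1 ^ 0 * (p.2.1 ^ 4 * p.2.2 ^ 0)) + ((2*S)⁻¹^2 - (2*S)⁻¹ + 1/4) * (p.1 ^ 0 * (p.2.1 ^ 0 * p.2.2 ^ 4)) + (4*(2*S)⁻¹^2) * (p.1 ^ 3 * (p.2.1 ^ 1 * p.2.2 ^ 0)) + (4*(2*S)⁻¹^2) * (p.1 ^ 3 * (p.2.1 ^ 0 * p.2.2 ^ 1)) + (4*(2*S)⁻¹^2) * (p.1 ^ 1 * (p.2.1 ^ 3 * p.2.2 ^ 0)) + (4*(2*S)⁻¹^2) * (p.1 ^ 0 * (p.2.1 ^ 3 * p.2.2 ^ 1)) + (4*(2*S)⁻¹^2 - 2*(2*S)⁻¹) * (p.1 ^ 1 * (p.2.1 ^ 0 * p.2.2 ^ 3)) + (4*(2*S)⁻¹^2 - 2*(2*S)⁻¹)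 * (p.1 ^ 0 * (p.2.1 ^ 1 * p.2.2 ^ 3))) ρ :=
    hVI8.add ((hmono_int 0 1 3).const_mul (4*(2*S)⁻¹^2 - 2*(2*S)⁻¹))
  have hVI10 : Integrable (fun p : ℝ × ℝ × ℝ => ((2*S)⁻¹^2) * (p.1 ^ 4 * (p.2.1 ^ 0 * p.2.2 ^ 0)) + ((2*S)⁻¹^2) * (p.1 ^ 0 * (p.2.1 ^ 4 * p.2.2 ^ 0)) + ((2*S)⁻¹^2 - (2*S)⁻¹ + 1/4) * (p.1 ^ 0 * (p.2.1 ^ 0 * p.2.2 ^ 4)) + (4*(2*S)⁻¹^2) * (p.1 ^ 3 * (p.2.1 ^ 1 * p.2.2 ^ 0)) + (4*(2*S)⁻¹^2) * (p.1 ^ 3 * (p.2.1 ^ 0 * p.2.2 ^ 1)) + (4*(2*S)⁻¹^2) * (p.1 ^ 1 * (p.2.1 ^ 3 * p.2.2 ^ 0)) + (4*(2*S)⁻¹^2) * (p.1 ^ 0 * (p.2.1 ^ 3 * p.2.2 ^ 1)) + (4*(2*S)⁻¹^2 - 2*(2*S)⁻¹) * (p.1 ^ 1 * (p.2.1 ^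 0 * p.2.2 ^ 3)) + (4*(2*S)⁻¹^2 - 2*(2*S)⁻¹) * (p.1 ^ 0 * (p.2.1 ^ 1 * p.2.2 ^ 3)) + (6*(2*S)⁻¹^2) * (p.1 ^ 2 * (p.2.1 ^ 2 * p.2.2 ^ 0))) ρ :=
    hVI9.add ((hmono_int 2 2 0).const_mul (6*(2*S)⁻¹^2))
  have hVI11 : Integrable (fun p : ℝ × ℝ × ℝ => ((2*S)⁻¹^2) * (p.1 ^ 4 * (p.2.1 ^ 0 * p.2.2 ^ 0)) + ((2*S)⁻¹^2) * (p.1 ^ 0 * (p.2.1 ^ 4 * p.2.2 ^ 0)) + ((2*S)⁻¹^2 - (2*S)⁻¹ + 1/4) * (p.1 ^ 0 * (p.2.1 ^ 0 * p.2.2 ^ 4)) + (4*(2*S)⁻¹^2) * (p.1 ^ 3 * (p.2.1 ^ 1 * p.2.2 ^ 0)) + (4*(2*S)⁻¹^2) * (p.1 ^ 3 * (p.2.1 ^ 0 * p.2.2 ^ 1)) + (4*(2*S)⁻¹^2) * (p.1 ^ 1 * (p.2.1 ^ 3 * p.2.2 ^ 0)) + (4*(2*S)⁻¹^2) * (p.1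 ^ 0 * (p.2.1 ^ 3 * p.2.2 ^ 1)) + (4*(2*S)⁻¹^2 - 2*(2*S)⁻¹) * (p.1 ^ 1 * (p.2.1 ^ 0 * p.2.2 ^ 3)) + (4*(2*S)⁻¹^2 - 2*(2*S)⁻¹) * (p.1 ^ 0 * (p.2.1 ^ 1 * p.2.2 ^ 3)) + (6*(2*S)⁻¹^2) * (p.1 ^ 2 * (p.2.1 ^ 2 * p.2.2 ^ 0)) + (6*(2*S)⁻¹^2 - (2*S)⁻¹) * (p.1 ^ 2 * (p.2.1 ^ 0 * p.2.2 ^ 2))) ρ :=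
    hVI10.add ((hmono_int 2 0 2).const_mul (6*(2*S)⁻¹^2 - (2*S)⁻¹))
  have hVI12 : Integrable (fun p : ℝ × ℝ × ℝ => ((2*S)⁻¹^2) * (p.1 ^ 4 * (p.2.1 ^ 0 * p.2.2 ^ 0)) + ((2*S)⁻¹^2) * (p.1 ^ 0 * (p.2.1 ^ 4 * p.2.2 ^ 0)) + ((2*S)⁻¹^2 - (2*S)⁻¹ + 1/4) * (p.1 ^ 0 * (p.2.1 ^ 0 * p.2.2 ^ 4)) + (4*(2*S)⁻¹^2) * (p.1 ^ 3 * (p.2.1 ^ 1 * p.2.2 ^ 0)) + (4*(2*S)⁻¹^2) * (p.1 ^ 3 * (p.2.1 ^ 0 * p.2.2 ^ 1)) + (4*(2*S)⁻¹^2) * (p.1 ^ 1 * (p.2.1 ^ 3 * p.2.2 ^ 0)) + (4*(2*S)⁻¹^2) * (p.1 ^ 0 * (p.2.1 ^ 3 * p.2.2 ^ 1)) + (4*(2*S)⁻¹^2 - 2*(2*S)⁻¹) * (p.1 ^ 1 * (p.2.1 ^ 0 * p.2.2 ^ 3)) + (4*(2*S)⁻¹^2 - 2*(2*S)⁻¹)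 * (p.1 ^ 0 * (p.2.1 ^ 1 * p.2.2 ^ 3)) + (6*(2*S)⁻¹^2) * (p.1 ^ 2 * (p.2.1 ^ 2 * p.2.2 ^ 0)) + (6*(2*S)⁻¹^2 - (2*S)⁻¹) * (p.1 ^ 2 * (p.2.1 ^ 0 * p.2.2 ^ 2)) + (6*(2*S)⁻¹^2 - (2*S)⁻¹) * (p.1 ^ 0 * (p.2.1 ^ 2 * p.2.2 ^ 2))) ρ :=
    hVI11.add ((hmono_int 0 2 2).const_mul (6*(2*S)⁻¹^2 - (2*S)⁻¹))
  have hVI13 : Integrable (fun p : ℝ × ℝ × ℝ => ((2*S)⁻¹^2) * (p.1 ^ 4 * (p.2.1 ^ 0 * p.2.2 ^ 0)) + ((2*S)⁻¹^2) * (p.1 ^ 0 * (p.2.1 ^ 4 * p.2.2 ^ 0)) + ((2*S)⁻¹^2 - (2*S)⁻¹ + 1/4) * (p.1 ^ 0 * (p.2.1 ^ 0 * p.2.2 ^ 4)) + (4*(2*S)⁻¹^2) * (p.1 ^ 3 * (p.2.1 ^ 1 * p.2.2 ^ 0)) + (4*(2*S)⁻¹^2) * (p.1 ^ 3 * (p.2.1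 ^ 0 * p.2.2 ^ 1)) + (4*(2*S)⁻¹^2) * (p.1 ^ 1 * (p.2.1 ^ 3 * p.2.2 ^ 0)) + (4*(2*S)⁻¹^2) * (p.1 ^ 0 * (p.2.1 ^ 3 * p.2.2 ^ 1)) + (4*(2*S)⁻¹^2 - 2*(2*S)⁻¹) * (p.1 ^ 1 * (p.2.1 ^ 0 * p.2.2 ^ 3)) + (4*(2*S)⁻¹^2 - 2*(2*S)⁻¹) * (p.1 ^ 0 * (p.2.1 ^ 1 * p.2.2 ^ 3)) + (6*(2*S)⁻¹^2) * (p.1 ^ 2 * (p.2.1 ^ 2 * p.2.2 ^ 0)) + (6*(2*S)⁻¹^2 - (2*S)⁻¹) * (p.1 ^ 2 * (p.2.1 ^ 0 * p.2.2 ^ 2)) + (6*(2*S)⁻¹^2 - (2*S)⁻¹) * (p.1 ^ 0 * (p.2.1 ^ 2 * p.2.2 ^ 2)) + (12*(2*S)⁻¹^2) * (p.1 ^ 2 * (p.2.1 ^ 1 * p.2.2 ^ 1))) ρ :=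
    hVI12.add ((hmono_int 2 1 1).const_mul (12*(2*S)⁻¹^2))
  have hVI14 : Integrable (fun p : ℝ × ℝ × ℝ => ((2*S)⁻¹^2) * (p.1 ^ 4 * (p.2.1 ^ 0 * p.2.2 ^ 0)) + ((2*S)⁻¹^2) * (p.1 ^ 0 * (p.2.1 ^ 4 * p.2.2 ^ 0)) + ((2*S)⁻¹^2 - (2*S)⁻¹ + 1/4) * (p.1 ^ 0 * (p.2.1 ^ 0 * p.2.2 ^ 4)) + (4*(2*S)⁻¹^2) * (p.1 ^ 3 * (p.2.1 ^ 1 * p.2.2 ^ 0)) + (4*(2*S)⁻¹^2) * (p.1 ^ 3 * (p.2.1 ^ 0 * p.2.2 ^ 1)) + (4*(2*S)⁻¹^2) * (p.1 ^ 1 * (p.2.1 ^ 3 * p.2.2 ^ 0)) + (4*(2*S)⁻¹^2) * (p.1 ^ 0 * (p.2.1 ^ 3 * p.2.2 ^ 1)) + (4*(2*S)⁻¹^2 - 2*(2*S)⁻¹) * (p.1 ^ 1 * (p.2.1 ^ 0 * p.2.2 ^ 3)) + (4*(2*S)⁻¹^2 - 2*(2*S)⁻¹) * (p.1 ^ 0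 * (p.2.1 ^ 1 * p.2.2 ^ 3)) + (6*(2*S)⁻¹^2) * (p.1 ^ 2 * (p.2.1 ^ 2 * p.2.2 ^ 0)) + (6*(2*S)⁻¹^2 - (2*S)⁻¹) * (p.1 ^ 2 * (p.2.1 ^ 0 * p.2.2 ^ 2)) + (6*(2*S)⁻¹^2 - (2*S)⁻¹) * (p.1 ^ 0 * (p.2.1 ^ 2 * p.2.2 ^ 2)) + (12*(2*S)⁻¹^2) * (p.1 ^ 2 * (p.2.1 ^ 1 * p.2.2 ^ 1)) + (12*(2*S)⁻¹^2) * (p.1 ^ 1 * (p.2.1 ^ 2 * p.2.2 ^ 1))) ρ :=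
    hVI13.add ((hmono_int 1 2 1).const_mul (12*(2*S)⁻¹^2))
  have hVI15 : Integrable (fun p : ℝ × ℝ × ℝ => ((2*S)⁻¹^2) * (p.1 ^ 4 * (p.2.1 ^ 0 * p.2.2 ^ 0)) + ((2*S)⁻¹^2) * (p.1 ^ 0 * (p.2.1 ^ 4 * p.2.2 ^ 0)) + ((2*S)⁻¹^2 - (2*S)⁻¹ + 1/4) * (p.1 ^ 0 * (p.2.1 ^ 0 * p.2.2 ^ 4)) + (4*(2*S)⁻¹^2) * (p.1 ^ 3 * (p.2.1 ^ 1 * p.2.2 ^ 0)) + (4*(2*S)⁻¹^2) * (p.1 ^ 3 * (p.2.1 ^ 0 * p.2.2 ^ 1)) + (4*(2*S)⁻¹^2) * (p.1 ^ 1 * (p.2.1 ^ 3 * p.2.2 ^ 0)) + (4*(2*S)⁻¹^2) * (p.1 ^ 0 * (p.2.1 ^ 3 * p.2.2 ^ 1)) + (4*(2*S)⁻¹^2 - 2*(2*S)⁻¹) * (p.1 ^ 1 * (p.2.1 ^ 0 * p.2.2 ^ 3)) + (4*(2*S)⁻¹^2 - 2*(2*S)⁻¹) * (p.1 ^ 0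 * (p.2.1 ^ 1 * p.2.2 ^ 3)) + (6*(2*S)⁻¹^2) * (p.1 ^ 2 * (p.2.1 ^ 2 * p.2.2 ^ 0)) + (6*(2*S)⁻¹^2 - (2*S)⁻¹) * (p.1 ^ 2 * (p.2.1 ^ 0 * p.2.2 ^ 2)) + (6*(2*S)⁻¹^2 - (2*S)⁻¹) * (p.1 ^ 0 * (p.2.1 ^ 2 * p.2.2 ^ 2)) + (12*(2*S)⁻¹^2) * (p.1 ^ 2 * (p.2.1 ^ 1 * p.2.2 ^ 1)) + (12*(2*S)⁻¹^2) * (p.1 ^ 1 * (p.2.1 ^ 2 * p.2.2 ^ 1)) + (12*(2*S)⁻¹^2 - 2*(2*S)⁻¹) * (p.1 ^ 1 * (p.2.1 ^ 1 * p.2.2 ^ 2))) ρ :=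
    hVI14.add ((hmono_int 1 1 2).const_mul (12*(2*S)⁻¹^2 - 2*(2*S)⁻¹))
  have hDint : Integrable (fun p => (φ p - 1/2 * Real.log S)^2) ρ :=
    hVI15.congr (Filter.Eventually.of_forall fun p => (hDexp p).symm)
  have hDval : ∫ p, (φ p - 1/2 * Real.log S)^2 ∂ρ = (P₁ + P₂) / S := by
    rw [integral_congr_ae (Filter.Eventually.of_forall hDexp)]
    rw [integral_add hVI14 ((hmono_int 1 1 2).const_mul (12*(2*S)⁻¹^2 - 2*(2*S)⁻¹)),
      integral_add hVI13 ((hmono_int 1 2 1).const_mul (12*(2*S)⁻¹^2)),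
      integral_add hVI12 ((hmono_int 2 1 1).const_mul (12*(2*S)⁻¹^2)),
      integral_add hVI11 ((hmono_int 0 2 2).const_mul (6*(2*S)⁻¹^2 - (2*S)⁻¹)),
      integral_add hVI10 ((hmono_int 2 0 2).const_mul (6*(2*S)⁻¹^2 - (2*S)⁻¹)),
      integral_add hVI9 ((hmono_int 2 2 0).const_mul (6*(2*S)⁻¹^2)),
      integral_add hVI8 ((hmono_int 0 1 3).const_mul (4*(2*S)⁻¹^2 - 2*(2*S)⁻¹)),
      integral_add hVI7 ((hmono_int 1 0 3).const_mul (4*(2*S)⁻¹^2 - 2*(2*S)⁻¹)),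
      integral_add hVI6 ((hmono_int 0 3 1).const_mul (4*(2*S)⁻¹^2)),
      integral_add hVI5 ((hmono_int 1 3 0).const_mul (4*(2*S)⁻¹^2)),
      integral_add hVI4 ((hmono_int 3 0 1).const_mul (4*(2*S)⁻¹^2)),
      integral_add hVI3 ((hmono_int 3 1 0).const_mul (4*(2*S)⁻¹^2)),
      integral_add hVI2 ((hmono_int 0 0 4).const_mul ((2*S)⁻¹^2 - (2*S)⁻¹ + 1/4)),
      integral_add hVI1 ((hmono_int 0 4 0).const_mul ((2*S)⁻¹^2))]
    simp only [MeasureTheory.integral_const_mul, hmono_val, A0, A1, A2, A3, A4,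
      B0, B1, B2, B3, B4, N0, N1, N2, N3, N4]
    rw [hSdef]
    have h0 : (1:ℝ) + P₁ + P₂ ≠ 0 := by positivity
    field_simp
    ring
  -- integrability and value of φ²
  have heqsq : ∀ p : ℝ × ℝ × ℝ, (φ p)^2
      = (φ p - 1/2 * Real.log S)^2 + (Real.log S) * φ p - (1/2 * Real.log S)^2 := by
    intro p; ring
  have hφsqint : Integrable (fun p => (φ p)^2) ρ := by
    refine Integrable.congr ?_ (Filter.Eventually.of_forall fun p => (heqsq p).symm)
    exact (hDint.add (hφint.const_mul _)).sub (integrable_const _)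
  have hE1 : Integrable (fun p : ℝ × ℝ × ℝ =>
      (φ p - 1/2 * Real.log S)^2 + (Real.log S) * φ p) ρ :=
    hDint.add (hφint.const_mul _)
  have hE2 : Integrable (fun p : ℝ × ℝ × ℝ => (Real.log S) * φ p) ρ := hφint.const_mul _
  have hφsqval : ∫ p, (φ p)^2 ∂ρ = (P₁ + P₂) / S + (1/2 * Real.log S)^2 := by
    rw [integral_congr_ae (Filter.Eventually.of_forall heqsq),
      integral_sub hE1 (integrable_const ((1/2 * Real.log S)^2)),
      integral_add hDint hE2, MeasureTheory.integral_const_mul,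
      hDval, hφval, integral_const]
    simp
    ring
  -- back to Ω
  have hmean : (∫ ω, i₃ (X₁ ω) (X₂ ω) (X₁ ω + X₂ ω + Z ω)) = 1/2 * Real.log S := by
    rw [integral_congr_ae (Filter.Eventually.of_forall hcomp), ← key φ hφmeas, hφval]
  have hfmeas : Measurable (fun ω => i₃ (X₁ ω) (X₂ ω) (X₁ ω + X₂ ω + Z ω)) := by
    have h : (fun ω => i₃ (X₁ ω) (X₂ ω) (X₁ ω + X₂ ω + Z ω))
        = fun ω => φ (X₁ ω, X₂ ω, Z ω) := funext hcomp
    rw [h]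
    exact hφmeas.comp hVmeas
  have hf2int : Integrable (fun ω => (i₃ (X₁ ω) (X₂ ω) (X₁ ω + X₂ ω + Z ω))^2) ℙ := by
    have h := keyInt (fun p => (φ p)^2) (hφmeas.pow_const 2) hφsqint
    refine h.congr (Filter.Eventually.of_forall fun ω => ?_)
    simp only [hcomp ω]
  have hMem : MemLp (fun ω => i₃ (X₁ ω) (X₂ ω) (X₁ ω + X₂ ω + Z ω)) 2 ℙ :=
    (memLp_two_iff_integrable_sq hfmeas.aestronglyMeasurable).mpr hf2int
  refine ⟨hmean, ?_⟩
  rw [variance_eq_sub hMem]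
  have e1 : ∫ ω, (i₃ (X₁ ω) (X₂ ω) (X₁ ω + X₂ ω + Z ω))^2
      = (P₁ + P₂) / S + (1/2 * Real.log S)^2 := by
    rw [← hφsqval, key (fun p => (φ p)^2) (hφmeas.pow_const 2)]
    exact integral_congr_ae (Filter.Eventually.of_forall fun ω => by simp only [hcomp ω])
  have epow : (fun ω => i₃ (X₁ ω) (X₂ ω) (X₁ ω + X₂ ω + Z ω)) ^ (2:ℕ)
      = fun ω => (i₃ (X₁ ω) (X₂ ω) (X₁ ω + X₂ ω + Z ω))^2 := by
    funext ω; simp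
  rw [epow, e1, hmean]
  ring
end

section
/- Fix P₁ > 0 and P₂ > 0 and define i₁ : ℝ³ → ℝ by i₁(x₁, x₂, y) := (1/2)·log(1 + P₁) − (y − x₁ − x₂)²/2 + (y − x₂)²/(2(1 + P₁)). Let X₁ ~ N(0, P₁), X₂ ~ N(0, P₂), and Z ~ N(0, 1) be mutually independent and set Y = X₁ + X₂ + Z. Then E[i₁(X₁, X₂, Y)] = (1/2)·log(1 + P₁) and Var(i₁(X₁, X₂, Y)) = P₁/(1 + P₁). -/
open MeasureTheory ProbabilityTheory

open Real NNReal Filter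

namespace GM



lemma integrable_pow_mul_exp {b : ℝ} (hb : 0 < b) (n : ℕ) :
    Integrable fun x : ℝ => x ^ n * Real.exp (-b * x ^ 2) := by
  have hmeas : AEStronglyMeasurable (fun x : ℝ => x ^ n * Real.exp (-b * x ^ 2)) volume := by
    exact (measurable_id.pow_const n).mul
      ((measurable_id.pow_const 2).const_mul (-b)).exp |>.aestronglyMeasurable
  refine Integrable.mono' (g := fun x : ℝ =>
      Real.exp (-b * x ^ 2) + (n.factorial * (2 / b) ^ n) * Real.exp (-(b / 2) * x ^ 2)) ?_ hmeas ?_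
  · exact (integrable_exp_neg_mul_sq hb).add
      ((integrable_exp_neg_mul_sq (by linarith : (0:ℝ) < b / 2)).const_mul _)
  · filter_upwards with x
    have hx2 : (0:ℝ) ≤ (b / 2) * x ^ 2 := by positivity
    have h1 : ((b / 2) * x ^ 2) ^ n / n.factorial ≤ Real.exp ((b / 2) * x ^ 2) :=
      Real.pow_div_factorial_le_exp _ hx2 n
    have hfac : (0:ℝ) < n.factorial := by positivity
    have h2 : (x ^ 2) ^ n ≤ n.factorial * (2 / b) ^ n * Real.exp ((b / 2) * x ^ 2) := by
      rw [div_le_iff₀ hfac] at h1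
      have : ((b / 2) * x ^ 2) ^ n = (b / 2) ^ n * (x ^ 2) ^ n := by ring
      rw [this] at h1
      have hbn : (0:ℝ) < (b / 2) ^ n := by positivity
      calc (x ^ 2) ^ n = ((b/2)^n * (x^2)^n) * (2/b)^n := by
            rw [mul_comm ((b/2)^n), mul_assoc, ← mul_pow, div_mul_div_comm, mul_comm b 2,
              div_self (by positivity), one_pow, mul_one]
          _ ≤ (Real.exp ((b/2)*x^2) * n.factorial) * (2/b)^n := by
            apply mul_le_mul_of_nonneg_right h1 (by positivity)
          _ = n.factorial * (2 / b) ^ n * Real.exp ((b / 2) * x ^ 2) := by ring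
    have habs : ‖x ^ n * Real.exp (-b * x ^ 2)‖ = |x| ^ n * Real.exp (-b * x ^ 2) := by
      rw [norm_mul, norm_pow, Real.norm_eq_abs, Real.norm_eq_abs,
        abs_of_pos (Real.exp_pos _)]
    rw [habs]
    have hcase : |x| ^ n ≤ 1 + (x ^ 2) ^ n := by
      rcases le_total (|x|) 1 with h | h
      · have := pow_le_one₀ (abs_nonneg x) h (n := n)
        nlinarith [pow_nonneg (sq_nonneg x) n]
      · have h' : |x| ^ n ≤ (|x| ^ 2) ^ n := by
          rw [← pow_mul]
          exact pow_le_pow_right₀ h (by omega)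
        have h'' : (|x| ^ 2) ^ n = (x ^ 2) ^ n := by rw [sq_abs]
        nlinarith [pow_nonneg (sq_nonneg x) n]
    calc |x| ^ n * Real.exp (-b * x ^ 2)
        ≤ (1 + (x ^ 2) ^ n) * Real.exp (-b * x ^ 2) := by
          apply mul_le_mul_of_nonneg_right hcase (Real.exp_pos _).le
      _ ≤ Real.exp (-b * x ^ 2)
            + (n.factorial * (2 / b) ^ n * Real.exp ((b / 2) * x ^ 2)) * Real.exp (-b * x ^ 2) := by
          rw [add_mul, one_mul]
          gcongr
      _ = Real.exp (-b * x ^ 2) + (n.factorial * (2 / b) ^ n) * Real.exp (-(b / 2) * x ^ 2) := by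
          rw [mul_assoc, ← Real.exp_add]
          ring_nf


lemma tendsto_pow_mul_exp_atTop {b : ℝ} (hb : 0 < b) (n : ℕ) :
    Tendsto (fun x : ℝ => x ^ n * Real.exp (-b * x ^ 2)) atTop (nhds 0) := by
  have hg : Tendsto (fun x : ℝ => Real.exp (-(1/2) * x)) atTop (nhds 0) := by
    apply Real.tendsto_exp_atBot.comp
    exact Tendsto.const_mul_atTop_of_neg (by norm_num) tendsto_id
  have h := (rpow_mul_exp_neg_mul_sq_isLittleO_exp_neg hb (n : ℝ)).tendsto_zero_of_tendsto hg
  refine h.congr fun x => ?_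
  rw [Real.rpow_natCast]

lemma tendsto_pow_mul_exp_atBot {b : ℝ} (hb : 0 < b) (n : ℕ) :
    Tendsto (fun x : ℝ => x ^ n * Real.exp (-b * x ^ 2)) atBot (nhds 0) := by
  have h : Tendsto (fun x : ℝ => (-x) ^ n * Real.exp (-b * (-x) ^ 2)) atTop (nhds 0) := by
    have h2 := (tendsto_pow_mul_exp_atTop hb n).const_mul ((-1:ℝ)^n)
    rw [mul_zero] at h2
    refine h2.congr fun x => ?_
    ring_nf
  have := h.comp tendsto_neg_atBot_atTop
  refine this.congr fun x => ?_
  simp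

lemma parts_rec {b : ℝ} (hb : 0 < b) (n : ℕ) :
    ∫ x : ℝ, x ^ (n + 2) * Real.exp (-b * x ^ 2)
      = ((n + 1 : ℝ) / (2 * b)) * ∫ x : ℝ, x ^ n * Real.exp (-b * x ^ 2) := by
  set g : ℝ → ℝ := fun x => x ^ (n + 1) * Real.exp (-b * x ^ 2) with hg
  set g' : ℝ → ℝ := fun x =>
    (n + 1 : ℝ) * x ^ n * Real.exp (-b * x ^ 2) - 2 * b * (x ^ (n + 2) * Real.exp (-b * x ^ 2))
    with hg'
  have hderiv : ∀ x : ℝ, HasDerivAt g (g' x) x := by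
    intro x
    have h1 : HasDerivAt (fun x : ℝ => x ^ (n + 1)) ((n + 1 : ℝ) * x ^ n) x := by
      simpa using hasDerivAt_pow (n + 1) x
    have h2 : HasDerivAt (fun x : ℝ => Real.exp (-b * x ^ 2))
        (Real.exp (-b * x ^ 2) * (-b * (2 * x))) x := by
      have h3 : HasDerivAt (fun x : ℝ => -b * x ^ 2) (-b * (2 * x)) x := by
        simpa using ((hasDerivAt_pow 2 x).const_mul (-b))
      exact (Real.hasDerivAt_exp _).comp x h3
    have := h1.mul h2
    refine this.congr_deriv ?_
    simp only [hg']
    ring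
  have hint : Integrable g' := by
    have := (((integrable_pow_mul_exp hb n).const_mul ((n:ℝ)+1)).sub
      ((integrable_pow_mul_exp hb (n+2)).const_mul (2*b)))
    refine this.congr ?_
    filter_upwards with x
    simp only [Pi.sub_apply, hg']
    ring
  have hzero : ∫ x, g' x = 0 := by
    rw [MeasureTheory.integral_of_hasDerivAt_of_tendsto hderiv hint
      (tendsto_pow_mul_exp_atBot hb (n+1)) (tendsto_pow_mul_exp_atTop hb (n+1))]
    simp
  have hsplit : ∫ x, g' x
      = (n + 1 : ℝ) * (∫ x, x ^ n * Real.exp (-b * x ^ 2))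
        - 2 * b * ∫ x, x ^ (n + 2) * Real.exp (-b * x ^ 2) := by
    simp only [hg']
    have hrw : (fun x : ℝ => (↑n + 1) * x ^ n * Real.exp (-b * x ^ 2)
        - 2 * b * (x ^ (n + 2) * Real.exp (-b * x ^ 2)))
        = fun x : ℝ => ((↑n + 1) : ℝ) * (x ^ n * Real.exp (-b * x ^ 2))
          - 2 * b * (x ^ (n + 2) * Real.exp (-b * x ^ 2)) := by
      funext x; ring
    rw [hrw]
    rw [integral_sub (((integrable_pow_mul_exp hb n).const_mul _))
      (((integrable_pow_mul_exp hb (n+2)).const_mul _))]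
    rw [integral_const_mul, integral_const_mul]
  rw [hsplit] at hzero
  have hne : (2*b) ≠ 0 := by positivity
  rw [div_mul_eq_mul_div, eq_div_iff hne]
  linarith

lemma odd_moment {b : ℝ} (n : ℕ) :
    ∫ x : ℝ, x ^ (2 * n + 1) * Real.exp (-b * x ^ 2) = 0 := by
  have h := MeasureTheory.integral_neg_eq_self (fun x : ℝ => x ^ (2*n+1) * Real.exp (-b * x ^ 2)) volume
  have h2 : (fun x : ℝ => (-x) ^ (2*n+1) * Real.exp (-b * (-x) ^ 2))
      = fun x : ℝ => -(x ^ (2*n+1) * Real.exp (-b * x ^ 2)) := by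
    funext x; rw [Odd.neg_pow ⟨n, by ring⟩, neg_sq]; ring
  rw [h2, integral_neg] at h
  linarith


lemma integral_gaussianReal_eq {v : ℝ≥0} (hv : v ≠ 0) (f : ℝ → ℝ) :
    ∫ x, f x ∂(gaussianReal 0 v)
      = ∫ x, gaussianPDFReal 0 v x * f x := by
  have hpdf : gaussianPDF 0 v = fun x => (((gaussianPDFReal 0 v x).toNNReal : ℝ≥0) : ENNReal) := by
    funext x; rw [gaussianPDF_def]; rfl
  rw [gaussianReal_of_var_ne_zero 0 hv, hpdf,
    integral_withDensity_eq_integral_smul ((measurable_gaussianPDFReal 0 v).real_toNNReal) f]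
  congr 1
  funext x
  rw [NNReal.smul_def, smul_eq_mul, Real.coe_toNNReal _ (gaussianPDFReal_nonneg 0 v x)]

lemma gaussianPDFReal_eq (v : ℝ≥0) (hv : v ≠ 0) (x : ℝ) :
    gaussianPDFReal 0 v x = (√(2 * π * v))⁻¹ * Real.exp (-(1/(2*(v:ℝ))) * x ^ 2) := by
  have hv' : (0:ℝ) < v := lt_of_le_of_ne v.coe_nonneg (by exact_mod_cast (Ne.symm hv))
  rw [gaussianPDFReal]
  congr 1
  rw [sub_zero]
  ring_nf

lemma pow_moment_gaussianReal (v : ℝ≥0) (hv : v ≠ 0) (n : ℕ) :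
    ∫ x, x ^ n ∂(gaussianReal 0 v)
      = (√(2 * π * v))⁻¹ * ∫ x : ℝ, x ^ n * Real.exp (-(1/(2*(v:ℝ))) * x ^ 2) := by
  rw [integral_gaussianReal_eq hv]
  rw [← integral_const_mul]
  congr 1
  funext x
  rw [gaussianPDFReal_eq v hv]
  ring

lemma sqrt_fact (v : ℝ≥0) (hv : v ≠ 0) :
    (√(2 * π * v))⁻¹ * √(π / (1/(2*(v:ℝ)))) = 1 := by
  have hv' : (0:ℝ) < v := lt_of_le_of_ne v.coe_nonneg (by exact_mod_cast (Ne.symm hv))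
  have h1 : π / (1/(2*(v:ℝ))) = 2 * π * v := by field_simp
  rw [h1, inv_mul_cancel₀]
  positivity

lemma moment_two_gaussianReal (v : ℝ≥0) (hv : v ≠ 0) :
    ∫ x, x ^ 2 ∂(gaussianReal 0 v) = v := by
  have hv' : (0:ℝ) < v := lt_of_le_of_ne v.coe_nonneg (by exact_mod_cast (Ne.symm hv))
  have hb : (0:ℝ) < 1/(2*(v:ℝ)) := by positivity
  have hp := parts_rec hb 0
  rw [show (0:ℕ)+2 = 2 from rfl, show ((0:ℕ):ℝ)+1 = 1 by norm_num] at hp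
  simp only [pow_zero, one_mul] at hp
  rw [pow_moment_gaussianReal v hv 2, hp, integral_gaussian,
    show (1:ℝ) / (2 * (1/(2*(v:ℝ)))) = v by field_simp]
  calc (√(2 * π * v))⁻¹ * ((v:ℝ) * √(π / (1/(2*(v:ℝ)))))
      = (v:ℝ) * ((√(2 * π * v))⁻¹ * √(π / (1/(2*(v:ℝ))))) := by ring
    _ = v := by rw [sqrt_fact v hv, mul_one]

lemma moment_four_gaussianReal (v : ℝ≥0) (hv : v ≠ 0) :
    ∫ x, x ^ 4 ∂(gaussianReal 0 v) = 3 * (v:ℝ) ^ 2 := by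
  have hv' : (0:ℝ) < v := lt_of_le_of_ne v.coe_nonneg (by exact_mod_cast (Ne.symm hv))
  have hb : (0:ℝ) < 1/(2*(v:ℝ)) := by positivity
  have hp2 := parts_rec hb 2
  have hp0 := parts_rec hb 0
  rw [show (2:ℕ)+2 = 4 from rfl, show ((2:ℕ):ℝ)+1 = 3 by norm_num] at hp2
  rw [show (0:ℕ)+2 = 2 from rfl, show ((0:ℕ):ℝ)+1 = 1 by norm_num] at hp0
  simp only [pow_zero, one_mul] at hp0
  rw [pow_moment_gaussianReal v hv 4, hp2, hp0, integral_gaussian]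
  have h1 : (3:ℝ) / (2 * (1/(2*(v:ℝ)))) = 3 * v := by field_simp
  have h2 : (1:ℝ) / (2 * (1/(2*(v:ℝ)))) = v := by field_simp
  rw [h1, h2]
  have := sqrt_fact v hv
  calc (√(2 * π * v))⁻¹ * (3 * v * ((v:ℝ) * √(π / (1/(2*(v:ℝ))))))
      = 3 * (v:ℝ)^2 * ((√(2 * π * v))⁻¹ * √(π / (1/(2*(v:ℝ))))) := by ring
    _ = 3 * (v:ℝ)^2 := by rw [this, mul_one]

lemma moment_one_gaussianReal (v : ℝ≥0) (hv : v ≠ 0) :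
    ∫ x, x ∂(gaussianReal 0 v) = 0 := by
  have h : ∫ x, x ∂(gaussianReal 0 v) = ∫ x, x ^ 1 ∂(gaussianReal 0 v) := by simp
  rw [h, pow_moment_gaussianReal v hv 1]
  have := odd_moment (b := 1/(2*(v:ℝ))) 0
  rw [show 2*0+1 = 1 from rfl] at this
  rw [this, mul_zero]

lemma moment_three_gaussianReal (v : ℝ≥0) (hv : v ≠ 0) :
    ∫ x, x ^ 3 ∂(gaussianReal 0 v) = 0 := by
  rw [pow_moment_gaussianReal v hv 3, show (3:ℕ) = 2*1+1 by norm_num, odd_moment, mul_zero]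

lemma integrable_pow_gaussianReal (v : ℝ≥0) (hv : v ≠ 0) (n : ℕ) :
    Integrable (fun x : ℝ => x ^ n) (gaussianReal 0 v) := by
  have hv' : (0:ℝ) < v := lt_of_le_of_ne v.coe_nonneg (by exact_mod_cast (Ne.symm hv))
  have hb : (0:ℝ) < 1/(2*(v:ℝ)) := by positivity
  rw [gaussianReal_of_var_ne_zero 0 hv]
  rw [integrable_withDensity_iff (measurable_gaussianPDF 0 v)
    (ae_of_all _ fun x => by rw [gaussianPDF]; exact ENNReal.ofReal_lt_top)]
  refine ((integrable_pow_mul_exp hb n).const_mul ((√(2 * π * v))⁻¹)).congr ?_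
  filter_upwards with x
  rw [gaussianPDF, ENNReal.toReal_ofReal (gaussianPDFReal_nonneg 0 v x),
    gaussianPDFReal_eq v hv]
  ring
section Prod

variable {v₁ v₂ : ℝ≥0}



lemma mono_int (hv₁ : v₁ ≠ 0) (hv₂ : v₂ ≠ 0) (i j : ℕ) : Integrable (fun p : ℝ × ℝ => p.1 ^ i * p.2 ^ j) ((gaussianReal 0 v₁).prod (gaussianReal 0 v₂)) :=
  (integrable_pow_gaussianReal v₁ hv₁ i).mul_prod (integrable_pow_gaussianReal v₂ hv₂ j)

lemma mono_val (i j : ℕ) : ∫ p : ℝ × ℝ, p.1 ^ i * p.2 ^ j ∂((gaussianReal 0 v₁).prod (gaussianReal 0 v₂))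
    = (∫ x, x ^ i ∂(gaussianReal 0 v₁)) * ∫ x, x ^ j ∂(gaussianReal 0 v₂) :=
  integral_prod_mul (fun x => x ^ i) (fun x => x ^ j)

lemma moment_zero (v : ℝ≥0) : ∫ x : ℝ, x ^ 0 ∂(gaussianReal 0 v) = 1 := by
  simp

end Prod
end GM


lemma integral_add4 {α : Type*} [MeasurableSpace α] (μ : Measure α) (f g h k : α → ℝ)
    (hf : Integrable f μ) (hg : Integrable g μ) (hh : Integrable h μ) (hk : Integrable k μ) :
    ∫ x, (f x + g x + h x + k x) ∂μ
      = (∫ x, f x ∂μ) + (∫ x, g x ∂μ) + (∫ x, h x ∂μ) + (∫ x, k x ∂μ) := by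
  have h1 := integral_add ((hf.add hg).add hh) hk
  have h2 := integral_add (hf.add hg) hh
  have h3 := integral_add hf hg
  simp only [Pi.add_apply] at h1 h2 h3
  rw [h1, h2, h3]

lemma integral_add5 {α : Type*} [MeasurableSpace α] (μ : Measure α) (f g h k l : α → ℝ)
    (hf : Integrable f μ) (hg : Integrable g μ) (hh : Integrable h μ) (hk : Integrable k μ)
    (hl : Integrable l μ) :
    ∫ x, (f x + g x + h x + k x + l x) ∂μ
      = (∫ x, f x ∂μ) + (∫ x, g x ∂μ) + (∫ x, h x ∂μ) + (∫ x, k x ∂μ) + (∫ x, l x ∂μ) := by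
  have h1 := integral_add (((hf.add hg).add hh).add hk) hl
  simp only [Pi.add_apply] at h1
  rw [h1, integral_add4 μ f g h k hf hg hh hk]

open MeasureTheory ProbabilityTheory



/-- For the Gaussian MAC `Y = X₁ + X₂ + Z` with `X₁ ~ N(0, P₁)`,
`X₂ ~ N(0, P₂)`, `Z ~ N(0, 1)` mutually independent, the conditional information density
`i₁(x₁, x₂, y) = (1/2) log (1 + P₁) − (y − x₁ − x₂)²/2 + (y − x₂)²/(2(1 + P₁))`
satisfies `E[i₁(X₁, X₂, Y)] = (1/2) log (1 + P₁)` and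
`Var(i₁(X₁, X₂, Y)) = P₁/(1 + P₁)`. -/
theorem gaussian_mac_conditional_information_density_moments
    {Ω : Type*} [MeasureSpace Ω] [IsProbabilityMeasure (ℙ : Measure Ω)]
    (P₁ P₂ : ℝ) (hP₁ : 0 < P₁) (hP₂ : 0 < P₂)
    (X₁ X₂ Z : Ω → ℝ) (hX₁ : Measurable X₁) (hX₂ : Measurable X₂) (hZ : Measurable Z)
    (hX₁law : Measure.map X₁ (ℙ : Measure Ω) = gaussianReal 0 (Real.toNNReal P₁))
    (hX₂law : Measure.map X₂ (ℙ : Measure Ω) = gaussianReal 0 (Real.toNNReal P₂))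
    (hZlaw : Measure.map Z (ℙ : Measure Ω) = gaussianReal 0 1)
    (hindep : iIndepFun
      ![X₁, X₂, Z] (ℙ : Measure Ω))
    (i₁ : ℝ → ℝ → ℝ → ℝ)
    (hi₁ : ∀ x₁ x₂ y, i₁ x₁ x₂ y = (1/2) * Real.log (1 + P₁)
        - (y - x₁ - x₂)^2/2 + (y - x₂)^2/(2*(1 + P₁))) :
    (∫ ω, i₁ (X₁ ω) (X₂ ω) (X₁ ω + X₂ ω + Z ω)) = (1/2) * Real.log (1 + P₁) ∧
    variance (fun ω => i₁ (X₁ ω) (X₂ ω) (X₁ ω + X₂ ω + Z ω)) (ℙ : Measure Ω)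
      = P₁ / (1 + P₁) := by
  have h1P : (0:ℝ) < 1 + P₁ := by linarith
  set c : ℝ := (1/2) * Real.log (1 + P₁) with hc
  set a : ℝ := 1 / (2 * (1 + P₁)) with ha
  set b' : ℝ := a - 1/2 with hb'
  set v₁ : ℝ≥0 := Real.toNNReal P₁ with hv₁def
  have hv₁ : v₁ ≠ 0 := by
    simp only [hv₁def, ne_eq, Real.toNNReal_eq_zero, not_le]
    exact hP₁
  have hv₁c : (v₁ : ℝ) = P₁ := Real.coe_toNNReal P₁ hP₁.le
  have hv₂ : (1 : ℝ≥0) ≠ 0 := one_ne_zero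
  set μp := (gaussianReal 0 v₁).prod (gaussianReal 0 (1 : ℝ≥0)) with hμp
  set G : ℝ × ℝ → ℝ := fun p => c + a * p.1 ^ 2 + (2*a) * (p.1 * p.2) + b' * p.2 ^ 2 with hG
  set T : Ω → ℝ × ℝ := fun ω => (X₁ ω, Z ω) with hT
  have hTm : Measurable T := hX₁.prodMk hZ
  have hGm : Measurable G := by fun_prop
  -- pointwise identity
  have hpt : ∀ ω, i₁ (X₁ ω) (X₂ ω) (X₁ ω + X₂ ω + Z ω) = G (T ω) := by
    intro ω
    rw [hi₁]
    simp only [hG, hT, hb', ha]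
    field_simp
    ring
  -- law of the pair
  have hIndep : IndepFun X₁ Z ℙ := by
    have := hindep.indepFun (i := 0) (j := 2) (by decide)
    simpa using this
  have hmap : Measure.map T ℙ = μp := by
    rw [hμp, ← hX₁law, ← hZlaw]
    exact (ProbabilityTheory.indepFun_iff_map_prod_eq_prod_map_map hX₁.aemeasurable
      hZ.aemeasurable).mp hIndep
  -- transfer of integrals
  have htrans : ∀ (F : ℝ × ℝ → ℝ), Measurable F →
      (∫ ω, F (T ω)) = ∫ p, F p ∂μp := by
    intro F hF
    rw [← hmap, integral_map hTm.aemeasurable]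
    rw [hmap]
    exact hF.aestronglyMeasurable
  -- integrability helpers
  have hx2 : Integrable (fun p : ℝ × ℝ => p.1 ^ 2) μp := by
    simpa using GM.mono_int hv₁ hv₂ 2 0
  have hz2 : Integrable (fun p : ℝ × ℝ => p.2 ^ 2) μp := by
    simpa using GM.mono_int hv₁ hv₂ 0 2
  have hxz : Integrable (fun p : ℝ × ℝ => p.1 * p.2) μp := by
    simpa using GM.mono_int hv₁ hv₂ 1 1
  have hx4 : Integrable (fun p : ℝ × ℝ => p.1 ^ 4) μp := by
    simpa using GM.mono_int hv₁ hv₂ 4 0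
  have hz4 : Integrable (fun p : ℝ × ℝ => p.2 ^ 4) μp := by
    simpa using GM.mono_int hv₁ hv₂ 0 4
  have hx2z2 : Integrable (fun p : ℝ × ℝ => p.1 ^ 2 * p.2 ^ 2) μp := GM.mono_int hv₁ hv₂ 2 2
  have hx3z : Integrable (fun p : ℝ × ℝ => p.1 ^ 3 * p.2) μp := by
    simpa using GM.mono_int hv₁ hv₂ 3 1
  have hxz3 : Integrable (fun p : ℝ × ℝ => p.1 * p.2 ^ 3) μp := by
    simpa using GM.mono_int hv₁ hv₂ 1 3
  -- moment values
  have vx2 : ∫ p : ℝ × ℝ, p.1 ^ 2 ∂μp = P₁ := by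
    have := GM.mono_val (v₁ := v₁) (v₂ := 1) 2 0
    simp only [pow_zero, mul_one] at this
    rw [this, GM.moment_two_gaussianReal v₁ hv₁]
    simp [hv₁c]
  have vz2 : ∫ p : ℝ × ℝ, p.2 ^ 2 ∂μp = 1 := by
    have := GM.mono_val (v₁ := v₁) (v₂ := 1) 0 2
    simp only [pow_zero, one_mul] at this
    rw [this, GM.moment_two_gaussianReal 1 hv₂]
    simp
  have vxz : ∫ p : ℝ × ℝ, p.1 * p.2 ∂μp = 0 := by
    have := GM.mono_val (v₁ := v₁) (v₂ := 1) 1 1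
    simp only [pow_one] at this
    rw [this, GM.moment_one_gaussianReal v₁ hv₁, zero_mul]
  have vx4 : ∫ p : ℝ × ℝ, p.1 ^ 4 ∂μp = 3 * P₁ ^ 2 := by
    have := GM.mono_val (v₁ := v₁) (v₂ := 1) 4 0
    simp only [pow_zero, mul_one] at this
    rw [this, GM.moment_four_gaussianReal v₁ hv₁]
    simp [hv₁c]
  have vz4 : ∫ p : ℝ × ℝ, p.2 ^ 4 ∂μp = 3 := by
    have := GM.mono_val (v₁ := v₁) (v₂ := 1) 0 4
    simp only [pow_zero, one_mul] at this
    rw [this, GM.moment_four_gaussianReal 1 hv₂]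
    simp
  have vx2z2 : ∫ p : ℝ × ℝ, p.1 ^ 2 * p.2 ^ 2 ∂μp = P₁ := by
    rw [GM.mono_val 2 2, GM.moment_two_gaussianReal v₁ hv₁,
      GM.moment_two_gaussianReal 1 hv₂, NNReal.coe_one, mul_one, hv₁c]
  have vx3z : ∫ p : ℝ × ℝ, p.1 ^ 3 * p.2 ∂μp = 0 := by
    have := GM.mono_val (v₁ := v₁) (v₂ := 1) 3 1
    simp only [pow_one] at this
    rw [this, GM.moment_three_gaussianReal v₁ hv₁, zero_mul]
  have vxz3 : ∫ p : ℝ × ℝ, p.1 * p.2 ^ 3 ∂μp = 0 := by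
    have := GM.mono_val (v₁ := v₁) (v₂ := 1) 1 3
    simp only [pow_one] at this
    rw [this, GM.moment_three_gaussianReal 1 hv₂, mul_zero]
  have hμpprob : IsProbabilityMeasure μp := by
    rw [hμp]; infer_instance
  -- Integrability of G
  have hGint : Integrable G μp := by
    refine ((integrable_const c).add (hx2.const_mul a)).add
      ((hxz.const_mul (2*a)).add (hz2.const_mul b')) |>.congr ?_
    filter_upwards with p
    simp only [Pi.add_apply, hG]
    ring
  -- mean of G
  have hGmean : ∫ p, G p ∂μp = c := by
    have e : ∀ p : ℝ × ℝ, G p = ((fun _ : ℝ × ℝ => c) p) + ((fun p : ℝ × ℝ => a * p.1 ^ 2) p)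
        + ((fun p : ℝ × ℝ => (2*a) * (p.1 * p.2)) p) + ((fun p : ℝ × ℝ => b' * p.2 ^ 2) p) := by
      intro p; simp only [hG]
    rw [integral_congr_ae (ae_of_all _ e),
      integral_add4 μp _ _ _ _ (integrable_const c) (hx2.const_mul a)
        (hxz.const_mul (2*a)) (hz2.const_mul b'),
      integral_const, integral_const_mul, integral_const_mul, integral_const_mul,
      vx2, vxz, vz2, probReal_univ]
    have hab : a * P₁ + b' = 0 := by
      rw [hb', ha]; field_simp; ring
    simp only [smul_eq_mul, ENNReal.toReal_one, one_mul, mul_zero, mul_one]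
    linarith
  -- mean claim
  have hmean : (∫ ω, i₁ (X₁ ω) (X₂ ω) (X₁ ω + X₂ ω + Z ω)) = c := by
    rw [integral_congr_ae (ae_of_all _ hpt), htrans G hGm, hGmean]
  refine ⟨hmean, ?_⟩
  -- variance
  -- (G p - c)^2 expansion
  have hsqint : Integrable (fun p : ℝ × ℝ => (G p - c)^2) μp := by
    refine (((hx4.const_mul (a^2)).add (hx2z2.const_mul (4*a^2 + 2*a*b'))).add
      (((hz4.const_mul (b'^2)).add (hx3z.const_mul (4*a^2))).add
        (hxz3.const_mul (4*a*b')))).congr ?_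
    filter_upwards with p
    simp only [Pi.add_apply, hG]
    ring
  have hsqval : ∫ p, (G p - c)^2 ∂μp
      = a^2 * (3*P₁^2) + (4*a^2 + 2*a*b') * P₁ + b'^2 * 3 + (4*a^2) * 0 + (4*a*b') * 0 := by
    have e : ∀ p : ℝ × ℝ, (G p - c)^2
        = ((fun p : ℝ × ℝ => (a^2) * p.1^4) p)
          + ((fun p : ℝ × ℝ => (4*a^2 + 2*a*b') * (p.1^2*p.2^2)) p)
          + ((fun p : ℝ × ℝ => (b'^2) * p.2^4) p)
          + ((fun p : ℝ × ℝ => (4*a^2) * (p.1^3*p.2)) p)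
          + ((fun p : ℝ × ℝ => (4*a*b') * (p.1*p.2^3)) p) := by
      intro p; simp only [hG]; ring
    rw [integral_congr_ae (ae_of_all _ e),
      integral_add5 μp _ _ _ _ _ (hx4.const_mul (a^2)) (hx2z2.const_mul (4*a^2 + 2*a*b'))
        (hz4.const_mul (b'^2)) (hx3z.const_mul (4*a^2)) (hxz3.const_mul (4*a*b')),
      integral_const_mul, integral_const_mul, integral_const_mul, integral_const_mul,
      integral_const_mul, vx4, vx2z2, vz4, vx3z, vxz3]
  -- MemLp 2
  have hfm : AEStronglyMeasurable (fun ω => i₁ (X₁ ω) (X₂ ω) (X₁ ω + X₂ ω + Z ω)) ℙ := by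
    have : (fun ω => i₁ (X₁ ω) (X₂ ω) (X₁ ω + X₂ ω + Z ω)) = fun ω => G (T ω) := funext hpt
    rw [this]
    exact (hGm.comp hTm).aestronglyMeasurable
  have hmem2 : MemLp (fun ω => i₁ (X₁ ω) (X₂ ω) (X₁ ω + X₂ ω + Z ω)) 2 ℙ := by
    have hsub : MemLp (fun ω => G (T ω) - c) 2 ℙ := by
      have hasm : AEStronglyMeasurable (fun ω => G (T ω) - c) ℙ :=
        ((hGm.comp hTm).sub measurable_const).aestronglyMeasurable
      rw [memLp_two_iff_integrable_sq hasm]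
      have hmeas' : AEStronglyMeasurable (fun p : ℝ × ℝ => (G p - c)^2) (Measure.map T ℙ) :=
        ((hGm.sub measurable_const).pow_const 2).aestronglyMeasurable
      have hcomp : Integrable ((fun p : ℝ × ℝ => (G p - c)^2) ∘ T) ℙ := by
        rw [← integrable_map_measure hmeas' hTm.aemeasurable, hmap]
        exact hsqint
      exact hcomp
    have hadd := hsub.add (memLp_const c)
    refine hadd.ae_eq ?_
    filter_upwards with ω
    simp only [Pi.add_apply, Pi.sub_apply]
    rw [hpt ω]
    ring
  -- conclude
  have hv : variance (fun ω => i₁ (X₁ ω) (X₂ ω) (X₁ ω + X₂ ω + Z ω)) ℙ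
      = ∫ ω, (((fun ω => i₁ (X₁ ω) (X₂ ω) (X₁ ω + X₂ ω + Z ω))
        - fun _ => ∫ ω, i₁ (X₁ ω) (X₂ ω) (X₁ ω + X₂ ω + Z ω)) ^ (2:ℕ) : Ω → ℝ) ω := by
    rw [variance_eq_integral hfm.aemeasurable]; rfl
  rw [hv]
  have : (fun ω => i₁ (X₁ ω) (X₂ ω) (X₁ ω + X₂ ω + Z ω)) = fun ω => G (T ω) := funext hpt
  rw [this] at hmean ⊢
  have e2 : ((fun ω => G (T ω)) - fun _ => ∫ ω, G (T ω)) ^ (2:ℕ)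
      = fun ω => (fun p => (G p - c)^2) (T ω) := by
    funext ω
    simp [hmean]
  rw [e2, htrans _ (by fun_prop), hsqval]
  -- final algebra
  rw [hb', ha]
  field_simp
  ring
end

section
/- Let τ be a random variable taking values in the non-negative integers with E[τ] ≤ N for some real N > 0. Then the Shannon entropy of τ satisfies H(τ) = −Σ_{k=0}^∞ P(τ = k)·log P(τ = k) ≤ (N + 1)·h_b(1/(N + 1)), where h_b(x) = −x·log x − (1 − x)·log(1 − x) is the binary entropy function (with the convention 0·log 0 = 0). -/
open MeasureTheory ProbabilityTheory
open scoped ENNReal NNReal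

lemma gibbs_aux {p q : ℝ} (hp : 0 ≤ p) (hq : 0 < q) :
    -(p * Real.log p) ≤ -(p * Real.log q) + (q - p) := by
  rcases eq_or_lt_of_le hp with h | h
  · simp only [← h, zero_mul, neg_zero, sub_zero, zero_add]
    linarith
  · have h1 : Real.log (q / p) ≤ q / p - 1 := Real.log_le_sub_one_of_pos (div_pos hq h)
    rw [Real.log_div hq.ne' h.ne'] at h1
    have h2 : p * (q / p) = q := by field_simp
    nlinarith

/-- If `τ` is a non-negative integer-valued random variable with `E[τ] ≤ N`
for some real `N > 0`, then its Shannon entropy (in nats) satisfies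
`H(τ) = −∑ₖ P(τ = k) log P(τ = k) ≤ (N + 1) · h_b(1/(N + 1))`, where
`h_b(x) = −x log x − (1 − x) log (1 − x)` is the binary entropy function
(with `0 · log 0 = 0`). -/
theorem entropy_le_of_mean_le
    {Ω : Type*} [MeasureSpace Ω] [IsProbabilityMeasure (ℙ : Measure Ω)]
    (τ : Ω → ℕ) (hτmeas : Measurable τ) (N : ℝ) (hN : 0 < N)
    (hτint : Integrable (fun ω => (τ ω : ℝ)) (ℙ : Measure Ω))
    (hmean : (∫ ω, (τ ω : ℝ)) ≤ N) :
    (∑' k : ℕ, -((ℙ {ω | τ ω = k}).toReal * Real.log (ℙ {ω | τ ω = k}).toReal))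
      ≤ (N + 1) * (-(1/(N+1)) * Real.log (1/(N+1))
          - (1 - 1/(N+1)) * Real.log (1 - 1/(N+1))) := by
  set θ : ℝ := 1 / (N + 1) with hθdef
  have hN1 : (0:ℝ) < N + 1 := by linarith
  have hθ0 : 0 < θ := by positivity
  have hθ1 : θ < 1 := by
    rw [hθdef, div_lt_one hN1]; linarith
  have h1θ0 : 0 < 1 - θ := by linarith
  have h1θ1 : 1 - θ < 1 := by linarith
  set μ : Measure ℕ := Measure.map τ ℙ with hμdef
  have hμP : IsProbabilityMeasure μ := Measure.isProbabilityMeasure_map hτmeas.aemeasurable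
  have hset : ∀ k : ℕ, ℙ {ω | τ ω = k} = μ {k} := by
    intro k
    rw [hμdef, Measure.map_apply hτmeas (measurableSet_singleton k)]
    rfl
  set p : ℕ → ℝ := fun k => (μ {k}).toReal with hpdef
  set q : ℕ → ℝ := fun k => θ * (1 - θ) ^ k with hqdef
  have hqpos : ∀ k, 0 < q k := fun k => by positivity
  have hppos : ∀ k, 0 ≤ p k := fun k => ENNReal.toReal_nonneg
  -- sum of μ singletons is 1
  have hμtsum : ∑' k : ℕ, μ {k} = 1 := by
    have : μ (⋃ k : ℕ, {k}) = ∑' k : ℕ, μ ({k} : Set ℕ) :=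
      measure_iUnion (fun i j hij => by simp [Function.onFun, hij]) fun k => measurableSet_singleton k
    rw [Set.iUnion_of_singleton] at this
    rw [← this, measure_univ]
  have hpsummable : Summable p :=
    ENNReal.summable_toReal (by rw [hμtsum]; exact ENNReal.one_ne_top)
  have hptsum : ∑' k, p k = 1 := by
    rw [hpdef, ← ENNReal.tsum_toReal_eq fun k => measure_ne_top μ _, hμtsum, ENNReal.toReal_one]
  -- integrability on μ
  have hcast_meas : Measurable (fun n : ℕ => (n : ℝ)) := measurable_from_nat
  have hint2 : Integrable (fun n : ℕ => (n : ℝ)) μ := by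
    rw [hμdef, integrable_map_measure hcast_meas.aestronglyMeasurable hτmeas.aemeasurable]
    exact hτint
  -- mean as a sum
  have hmean_sum : ∑' k : ℕ, (k : ℝ) * p k ≤ N := by
    have h1 : ∫ n : ℕ, (n : ℝ) ∂μ = ∫ ω, (τ ω : ℝ) := by
      rw [hμdef, integral_map hτmeas.aemeasurable hcast_meas.aestronglyMeasurable]
    have h2 := integral_countable' hint2
    simp only [smul_eq_mul] at h2
    have h3 : ∑' k : ℕ, (k : ℝ) * p k = ∫ n : ℕ, (n : ℝ) ∂μ := by
      rw [h2]; exact tsum_congr fun k => by rw [hpdef]; simp only [measureReal_def]; ring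
    rw [h3, h1]; exact hmean
  -- summability of k * p k
  have hkp_summable : Summable (fun k : ℕ => (k : ℝ) * p k) := by
    have hfin : ∑' k : ℕ, (k : ℝ≥0∞) * μ {k} ≠ ⊤ := by
      have := hint2.hasFiniteIntegral
      rw [HasFiniteIntegral, lintegral_countable'] at this
      have heq : ∀ k : ℕ, (‖(k:ℝ)‖₊ : ℝ≥0∞) * μ {k} = (k : ℝ≥0∞) * μ {k} := by
        intro k
        congr 1
        rw [← ENNReal.coe_natCast]
        norm_cast
      simp only [enorm_eq_nnnorm] at this
      rw [tsum_congr heq] at this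
      exact this.ne
    have := ENNReal.summable_toReal hfin
    have heq : ∀ k : ℕ, ((k : ℝ≥0∞) * μ {k}).toReal = (k : ℝ) * p k := by
      intro k
      rw [ENNReal.toReal_mul]
      simp [hpdef]
    exact this.congr heq
  -- geometric sum
  have hqsummable : Summable q := by
    have := summable_geometric_of_lt_one h1θ0.le h1θ1
    exact this.mul_left θ
  have hqtsum : ∑' k, q k = 1 := by
    rw [hqdef, tsum_mul_left, tsum_geometric_of_lt_one h1θ0.le h1θ1]
    rw [sub_sub_cancel, mul_inv_cancel₀ hθ0.ne']
  -- termwise Gibbs bound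
  set r : ℕ → ℝ := fun k => -(p k * Real.log (q k)) + (q k - p k) with hrdef
  have hterm : ∀ k, -(p k * Real.log (p k)) ≤ r k := fun k => gibbs_aux (hppos k) (hqpos k)
  -- rewrite r
  have hr_eq : ∀ k, r k = p k * (-Real.log θ) + ((k : ℝ) * p k) * (-Real.log (1 - θ))
      + (q k - p k) := by
    intro k
    rw [hrdef]
    simp only [hqdef]
    rw [Real.log_mul hθ0.ne' (by positivity), Real.log_pow]
    ring
  have hrsummable : Summable r := by
    rw [funext hr_eq]
    exact ((hpsummable.mul_right _).add (hkp_summable.mul_right _)).add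
      (hqsummable.sub hpsummable)
  -- sum of r
  have hrtsum : ∑' k, r k = -Real.log θ + (∑' k : ℕ, (k : ℝ) * p k) * (-Real.log (1 - θ)) := by
    rw [funext hr_eq]
    rw [Summable.tsum_add ((hpsummable.mul_right _).add (hkp_summable.mul_right _))
      (hqsummable.sub hpsummable)]
    rw [Summable.tsum_add (hpsummable.mul_right _) (hkp_summable.mul_right _)]
    rw [tsum_mul_right, tsum_mul_right, Summable.tsum_sub hqsummable hpsummable, hptsum, hqtsum]
    ring
  -- entropy summability and bound
  have hH_summable : Summable (fun k => -(p k * Real.log (p k))) := by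
    apply Summable.of_nonneg_of_le (fun k => ?_) hterm hrsummable
    rcases eq_or_lt_of_le (hppos k) with h | h
    · simp [← h]
    · have hp1 : p k ≤ 1 := by
        rw [hpdef]
        exact ENNReal.toReal_le_of_le_ofReal one_pos.le (by simpa using prob_le_one)
      have : Real.log (p k) ≤ 0 := Real.log_nonpos h.le hp1
      nlinarith
  have hmain : ∑' k, -(p k * Real.log (p k)) ≤ ∑' k, r k :=
    Summable.tsum_le_tsum hterm hH_summable hrsummable
  have hLHS : (∑' k : ℕ, -((ℙ {ω | τ ω = k}).toReal * Real.log (ℙ {ω | τ ω = k}).toReal))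
      = ∑' k, -(p k * Real.log (p k)) := tsum_congr fun k => by rw [hset k]
  have hlogneg : -Real.log (1 - θ) ≥ 0 := by
    have := Real.log_neg h1θ0 h1θ1
    linarith
  have hbound : ∑' k, r k ≤ -Real.log θ + N * (-Real.log (1 - θ)) := by
    rw [hrtsum]
    have := mul_le_mul_of_nonneg_right hmean_sum hlogneg
    linarith
  have hfinal : -Real.log θ + N * (-Real.log (1 - θ))
      = (N + 1) * (-(1/(N+1)) * Real.log (1/(N+1))
          - (1 - 1/(N+1)) * Real.log (1 - 1/(N+1))) := by
    rw [hθdef]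
    have h1 : (N + 1) * (1 / (N + 1)) = 1 := by field_simp
    have h2 : (N + 1) * (1 - 1 / (N + 1)) = N := by field_simp; ring
    linear_combination Real.log (1 / (N + 1)) * h1 + Real.log (1 - 1 / (N + 1)) * h2
  rw [hLHS, ← hfinal]
  exact hmain.trans hbound
end
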